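/- arXiv:2512.07481 — 3 statements merged into one kernel-verified Lean document; each statement's English description precedes it below -/
import Mathlib

section
/- Lemma 3.2 (barrier estimate). Let n ≥ 1, p > 1, β ∈ (0,1), M₁ > 0, and let Ω ⊂ ℝⁿ be a bounded open set for which there exist ρ > 0 and K > 0 such that the distance function d(x) = dist(x, ℝⁿ \ Ω) is C² on U_ρ = {x ∈ Ω : d(x) < ρ} with |∇d| = 1 and ‖D²d‖ ≤ K on U_ρ. Then there exist M₀ > M₁, ρ₀ ∈ (0, min(ρ,1)) and κ_p > 0, depending only on n, p, β, M₁ and K, such that for every M₂ ≥ M₀, every y ∈ ∂Ω and every x ∈ Ω with 0 < d(x) ≤ ρ₀, the function ψ(x') = M₁ β⁻¹ |x' − y|^β + M₂ β⁻¹ d(x')^β is twice differentiable at x, its gradient ∇ψ(x) = M₁|x − y|^{β−2}(x − y) + M₂ d(x)^{β−1} ∇d(x) is nonzero, and Δ_p ψ(x) = F(∇ψ(x), D²ψ(x)) ≤ κ_p (β − 1) M₂^{p−1} d(x)^{β(p−1) − p}. -/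
open MeasureTheory Metric Filter Topology

noncomputable section

/-- Hessian matrix `D²φ(x)` of a function `φ` at `x`. -/
def hessMat (n : ℕ) (φ : EuclideanSpace ℝ (Fin n) → ℝ) (x : EuclideanSpace ℝ (Fin n)) :
    Matrix (Fin n) (Fin n) ℝ :=
  fun i j => iteratedFDeriv ℝ 2 φ x ![EuclideanSpace.single i 1, EuclideanSpace.single j 1]

/-- Quadratic form `⟨M v, v⟩`. -/
def quadForm {ι : Type*} [Fintype ι] (M : Matrix ι ι ℝ) (v : ι → ℝ) : ℝ :=
  ∑ i, M.mulVec v i * v i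

/-- The non-variational symbol of the `p`-Laplacian:
`F(ξ, X) = |ξ|^{p-2} tr X + (p-2)|ξ|^{p-4} ⟨Xξ, ξ⟩`. -/
def Fsym (n : ℕ) (p : ℝ) (ξ : EuclideanSpace ℝ (Fin n)) (X : Matrix (Fin n) (Fin n) ℝ) : ℝ :=
  ‖ξ‖ ^ (p - 2) * X.trace + (p - 2) * ‖ξ‖ ^ (p - 4) * quadForm X (fun i => ξ i)

/-- `v` is viscosity `p`-harmonic in `Ω` at non-critical test points. -/
def ViscPHarmonic (n : ℕ) (p : ℝ) (Ω : Set (EuclideanSpace ℝ (Fin n)))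
    (v : EuclideanSpace ℝ (Fin n) → ℝ) : Prop :=
  ∀ x₀ ∈ Ω, ∀ r > (0 : ℝ), ball x₀ r ⊆ Ω →
    ∀ φ : EuclideanSpace ℝ (Fin n) → ℝ, ContDiffOn ℝ 2 φ (ball x₀ r) →
      φ x₀ = v x₀ → gradient φ x₀ ≠ 0 →
      ((∀ x ∈ ball x₀ r, v x ≤ φ x) →
          0 ≤ Fsym n p (gradient φ x₀) (hessMat n φ x₀)) ∧
      ((∀ x ∈ ball x₀ r, φ x ≤ v x) →
          Fsym n p (gradient φ x₀) (hessMat n φ x₀) ≤ 0)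

/-- The distance to the complement of `Ω`. -/
def distFn (n : ℕ) (Ω : Set (EuclideanSpace ℝ (Fin n))) (x : EuclideanSpace ℝ (Fin n)) : ℝ :=
  Metric.infDist x Ωᶜ

open InnerProductSpace

set_option maxHeartbeats 1000000

local notation "⟪" x ", " y "⟫" => @inner ℝ _ _ x y

lemma hess_eq_fderiv2 {n : ℕ} (φ : EuclideanSpace ℝ (Fin n) → ℝ) (x : EuclideanSpace ℝ (Fin n))
    (i j : Fin n) :
    hessMat n φ x i j
      = fderiv ℝ (fderiv ℝ φ) x (EuclideanSpace.single i 1) (EuclideanSpace.single j 1) := by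
  rw [hessMat, iteratedFDeriv_two_apply]
  simp

lemma gradient_coord {n : ℕ} (f : EuclideanSpace ℝ (Fin n) → ℝ) (x : EuclideanSpace ℝ (Fin n))
    (i : Fin n) :
    gradient f x i = fderiv ℝ f x (EuclideanSpace.single i 1) := by
  have h1 : gradient f x i = ⟪gradient f x, EuclideanSpace.single i (1:ℝ)⟫ := by
    rw [EuclideanSpace.inner_single_right]; simp
  rw [h1, gradient, InnerProductSpace.toDual_symm_apply]

lemma inner_self_rpow {n : ℕ} (v : EuclideanSpace ℝ (Fin n)) (t : ℝ) :
    ⟪v, v⟫ ^ (t/2) = ‖v‖ ^ t := by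
  rw [real_inner_self_eq_norm_sq, ← Real.rpow_natCast ‖v‖ 2, ← Real.rpow_mul (norm_nonneg v)]
  push_cast
  ring_nf

lemma euc_norm_sq {n : ℕ} (v : EuclideanSpace ℝ (Fin n)) : ‖v‖ ^ 2 = ∑ i, v i ^ 2 := by
  rw [← real_inner_self_eq_norm_sq, PiLp.inner_apply]
  simp [RCLike.inner_apply, sq]

lemma barrier_hasFDerivAt {n : ℕ} {β M₁ M₂ : ℝ} (hβ0 : 0 < β)
    {y z : EuclideanSpace ℝ (Fin n)} {d : EuclideanSpace ℝ (Fin n) → ℝ}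
    {D : EuclideanSpace ℝ (Fin n) →L[ℝ] ℝ}
    (hdz : 0 < d z) (hzy : z ≠ y) (hd : HasFDerivAt d D z) :
    HasFDerivAt (fun x' => M₁ / β * ‖x' - y‖ ^ β + M₂ / β * d x' ^ β)
      ((M₁ * ‖z - y‖ ^ (β - 2)) • (innerSL ℝ (z - y)) + (M₂ * (d z) ^ (β - 1)) • D) z := by
  have hsub : HasFDerivAt (fun w : EuclideanSpace ℝ (Fin n) => w - y)
      (ContinuousLinearMap.id ℝ _) z := (hasFDerivAt_id z).sub_const y
  have h1 := hsub.inner ℝ hsub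
  have hz0 : z - y ≠ 0 := sub_ne_zero.2 hzy
  have hne : ⟪z - y, z - y⟫ ≠ 0 := by
    have : (0:ℝ) < ⟪z - y, z - y⟫ := by
      rw [real_inner_self_eq_norm_sq]
      exact pow_pos (norm_pos_iff.2 hz0) 2
    exact this.ne'
  have h2 := (h1.rpow_const (p := β/2) (Or.inl hne)).const_mul (M₁/β)
  have h3 := (hd.rpow_const (p := β) (Or.inl hdz.ne')).const_mul (M₂/β)
  have h4 := h2.add h3
  have hfun : (fun x' => M₁ / β * ‖x' - y‖ ^ β + M₂ / β * d x' ^ β)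
      = (fun w => M₁ / β * ⟪w - y, w - y⟫ ^ (β/2) + M₂ / β * d w ^ β) := by
    funext w
    rw [inner_self_rpow]
  rw [hfun]
  refine h4.congr_fderiv ?_; symm
  ext v
  have e1 : ⟪z - y, z - y⟫ ^ (β/2 - 1) = ‖z - y‖ ^ (β - 2) := by
    rw [show β/2 - 1 = (β - 2)/2 by ring, inner_self_rpow]
  simp only [ContinuousLinearMap.add_apply, ContinuousLinearMap.coe_smul', Pi.smul_apply,
    innerSL_apply_apply, smul_eq_mul, ContinuousLinearMap.coe_comp', Function.comp_apply,
    ContinuousLinearMap.prod_apply, fderivInnerCLM_apply, ContinuousLinearMap.coe_id', id_eq]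
  rw [e1] at *
  rw [real_inner_comm v (z - y)]
  field_simp
  ring

lemma barrier_contDiffAt {n : ℕ} {β M₁ M₂ : ℝ}
    {y x : EuclideanSpace ℝ (Fin n)} {d : EuclideanSpace ℝ (Fin n) → ℝ}
    (hdx : 0 < d x) (hxy : x ≠ y) (hd : ContDiffAt ℝ 2 d x) :
    ContDiffAt ℝ 2 (fun x' => M₁ / β * ‖x' - y‖ ^ β + M₂ / β * d x' ^ β) x := by
  have hfun : (fun x' => M₁ / β * ‖x' - y‖ ^ β + M₂ / β * d x' ^ β)
      = (fun w => M₁ / β * ⟪w - y, w - y⟫ ^ (β/2) + M₂ / β * d w ^ β) := by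
    funext w; rw [inner_self_rpow]
  rw [hfun]
  have hsub : ContDiffAt ℝ 2 (fun w : EuclideanSpace ℝ (Fin n) => w - y) x :=
    (contDiffAt_id.sub contDiffAt_const)
  have hz0 : x - y ≠ 0 := sub_ne_zero.2 hxy
  have hinner : ContDiffAt ℝ 2 (fun w : EuclideanSpace ℝ (Fin n) => ⟪w - y, w - y⟫) x :=
    ContDiffAt.inner ℝ hsub hsub
  have hne : ⟪x - y, x - y⟫ ≠ 0 := by
    have : (0:ℝ) < ⟪x - y, x - y⟫ := by
      rw [real_inner_self_eq_norm_sq]; exact pow_pos (norm_pos_iff.2 hz0) 2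
    exact this.ne'
  exact ((hinner.rpow_const_of_ne hne).const_smul (M₁/β)).add
    ((hd.rpow_const_of_ne hdx.ne').const_smul (M₂/β))

lemma barrier_hess {n : ℕ} {β M₁ M₂ : ℝ} (hβ0 : 0 < β)
    {y x : EuclideanSpace ℝ (Fin n)} {d : EuclideanSpace ℝ (Fin n) → ℝ}
    {U : Set (EuclideanSpace ℝ (Fin n))} (hU : IsOpen U) (hxU : x ∈ U)
    (hd2 : ContDiffOn ℝ 2 d U) (hdpos : ∀ z ∈ U, 0 < d z) (hne : ∀ z ∈ U, z ≠ y)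
    (hψC : ContDiffAt ℝ 2 (fun x' => M₁ / β * ‖x' - y‖ ^ β + M₂ / β * d x' ^ β) x)
    (i j : Fin n) :
    hessMat n (fun x' => M₁ / β * ‖x' - y‖ ^ β + M₂ / β * d x' ^ β) x i j =
      M₁ * (β - 2) * ‖x - y‖ ^ (β - 4) * ((x - y) i) * ((x - y) j)
      + (if i = j then M₁ * ‖x - y‖ ^ (β - 2) else 0)
      + M₂ * (β - 1) * (d x) ^ (β - 2) * fderiv ℝ d x (EuclideanSpace.single i 1)
          * fderiv ℝ d x (EuclideanSpace.single j 1)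
      + M₂ * (d x) ^ (β - 1) * hessMat n d x i j := by
  set ei : EuclideanSpace ℝ (Fin n) := EuclideanSpace.single i 1 with hei
  set ej : EuclideanSpace ℝ (Fin n) := EuclideanSpace.single j 1 with hej
  set ψ := (fun x' => M₁ / β * ‖x' - y‖ ^ β + M₂ / β * d x' ^ β) with hψ
  have hdCx : ContDiffAt ℝ 2 d x := hd2.contDiffAt (hU.mem_nhds hxU)
  have hdx : 0 < d x := hdpos x hxU
  have hxy : x ≠ y := hne x hxU
  have hz0 : x - y ≠ 0 := sub_ne_zero.2 hxy
  have hinne : ⟪x - y, x - y⟫ ≠ 0 := by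
    have : (0:ℝ) < ⟪x - y, x - y⟫ := by
      rw [real_inner_self_eq_norm_sq]
      exact pow_pos (norm_pos_iff.2 hz0) 2
    exact this.ne'
  have hψd1 : DifferentiableAt ℝ (fderiv ℝ ψ) x :=
    (hψC.fderiv_right (m := 1) (by norm_num)).differentiableAt one_ne_zero
  have hdd : DifferentiableAt ℝ (fderiv ℝ d) x :=
    (hdCx.fderiv_right (m := 1) (by norm_num)).differentiableAt one_ne_zero
  -- step 1
  have step1 : hessMat n ψ x i j = fderiv ℝ (fun z => fderiv ℝ ψ z ej) x ei := by
    rw [hess_eq_fderiv2, fderiv_clm_apply hψd1 (differentiableAt_const ej)]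
    simp [hei, hej]
  -- step 2 : eventual equality with explicit formula
  set Φ : EuclideanSpace ℝ (Fin n) → ℝ := fun z =>
    M₁ * (⟪z - y, z - y⟫ ^ ((β - 2)/2) * ⟪z - y, ej⟫) + M₂ * (d z ^ (β - 1) * fderiv ℝ d z ej)
    with hΦ
  have hev : (fun z => fderiv ℝ ψ z ej) =ᶠ[nhds x] Φ := by
    filter_upwards [hU.mem_nhds hxU] with z hz
    have hdz : HasFDerivAt d (fderiv ℝ d z) z :=
      ((hd2.contDiffAt (hU.mem_nhds hz)).differentiableAt two_ne_zero).hasFDerivAt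
    rw [hψ, (barrier_hasFDerivAt hβ0 (hdpos z hz) (hne z hz) hdz).fderiv]
    have e1 : ⟪z - y, z - y⟫ ^ ((β - 2)/2) = ‖z - y‖ ^ (β - 2) := inner_self_rpow _ _
    simp only [hΦ, ContinuousLinearMap.add_apply, ContinuousLinearMap.coe_smul', Pi.smul_apply,
      innerSL_apply_apply, smul_eq_mul, e1]
    ring
  -- step 3 : differentiate Φ
  have hsub : HasFDerivAt (fun w : EuclideanSpace ℝ (Fin n) => w - y)
      (ContinuousLinearMap.id ℝ _) x := (hasFDerivAt_id x).sub_const y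
  have hA1 := (hsub.inner ℝ hsub).rpow_const (p := (β - 2)/2) (Or.inl hinne)
  have hA2 := hsub.inner ℝ (hasFDerivAt_const ej x)
  have hA := ((hA1.mul hA2).const_mul M₁)
  have hB1 := ((hdCx.differentiableAt two_ne_zero).hasFDerivAt).rpow_const (p := β - 1)
    (Or.inl hdx.ne')
  have hB2 := hdd.hasFDerivAt.clm_apply (hasFDerivAt_const ej x)
  have hB := ((hB1.mul hB2).const_mul M₂)
  have htot := hA.add hB
  rw [step1, hev.fderiv_eq, (show HasFDerivAt Φ _ x from htot).fderiv]
  -- step 4 : evaluate the derivative at ei and simplify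
  have e4 : ⟪x - y, x - y⟫ ^ ((β - 2)/2 - 1) = ‖x - y‖ ^ (β - 4) := by
    rw [show (β - 2)/2 - 1 = (β - 4)/2 by ring, inner_self_rpow]
  have e2 : ⟪x - y, x - y⟫ ^ ((β - 2)/2) = ‖x - y‖ ^ (β - 2) := inner_self_rpow _ _
  have eai : ⟪x - y, ei⟫ = (x - y) i := by
    rw [hei, EuclideanSpace.inner_single_right]; simp
  have eaj : ⟪x - y, ej⟫ = (x - y) j := by
    rw [hej, EuclideanSpace.inner_single_right]; simp
  have eija : ⟪ei, ej⟫ = if i = j then (1:ℝ) else 0 := by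
    rw [hei, EuclideanSpace.inner_single_left]
    by_cases h : i = j
    · subst h; simp [hej, EuclideanSpace.single_apply]
    · simp [hej, EuclideanSpace.single_apply, h, Ne.symm h]
  have ebm : β - 1 - 1 = β - 2 := by ring
  have ehd : fderiv ℝ (fderiv ℝ d) x ei ej = hessMat n d x i j := (hess_eq_fderiv2 d x i j).symm
  simp only [ContinuousLinearMap.add_apply, ContinuousLinearMap.coe_smul', Pi.smul_apply,
    smul_eq_mul, ContinuousLinearMap.coe_comp', Function.comp_apply,
    ContinuousLinearMap.prod_apply, fderivInnerCLM_apply, ContinuousLinearMap.coe_id', id_eq,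
    ContinuousLinearMap.flip_apply, ContinuousLinearMap.zero_apply, inner_zero_right,
    ContinuousLinearMap.comp_zero, e4, e2, ebm, ehd, eai, eaj, eija,
    real_inner_comm ei (x - y)]
  rw [real_inner_comm ei (x - y)] at *
  by_cases h : i = j <;> simp [h, eai, eaj] <;> ring

lemma trace_decomp {n : ℕ} (α γ δ ε : ℝ) (a w : Fin n → ℝ) (H : Matrix (Fin n) (Fin n) ℝ) :
    Matrix.trace (Matrix.of fun i j =>
        α * a i * a j + (if i = j then γ else 0) + δ * w i * w j + ε * H i j)
      = α * (∑ i, a i ^ 2) + n * γ + δ * (∑ i, w i ^ 2) + ε * Matrix.trace H := by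
  have h1 : ∀ b : Fin n → ℝ, ∀ c : ℝ, ∑ i, c * b i * b i = c * ∑ i, b i ^ 2 := by
    intro b c
    rw [Finset.mul_sum]
    exact Finset.sum_congr rfl fun i _ => by ring
  simp only [Matrix.trace, Matrix.diag, Matrix.of_apply, if_pos rfl]
  rw [Finset.sum_add_distrib, Finset.sum_add_distrib, Finset.sum_add_distrib, h1, h1,
    ← Finset.mul_sum, Finset.sum_const, Finset.card_univ, Fintype.card_fin, nsmul_eq_mul]
  simp [Matrix.trace]

lemma quad_decomp {n : ℕ} (α γ δ ε : ℝ) (a w : Fin n → ℝ) (H : Matrix (Fin n) (Fin n) ℝ)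
    (v : Fin n → ℝ) :
    quadForm (Matrix.of fun i j =>
        α * a i * a j + (if i = j then γ else 0) + δ * w i * w j + ε * H i j) v
      = α * (∑ i, a i * v i) ^ 2 + γ * (∑ i, v i ^ 2) + δ * (∑ i, w i * v i) ^ 2
        + ε * quadForm H v := by
  have hpull : ∀ (b : Fin n → ℝ) (c : ℝ), ∑ j, c * b j * v j = c * ∑ j, b j * v j := by
    intro b c
    rw [Finset.mul_sum]
    exact Finset.sum_congr rfl fun j _ => by ring
  have hite : ∀ i : Fin n, ∑ j, (if i = j then γ else 0) * v j = γ * v i := by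
    intro i
    simp [ite_mul]
  have hrow : ∀ i, (Matrix.of fun i j =>
      α * a i * a j + (if i = j then γ else 0) + δ * w i * w j + ε * H i j).mulVec v i
      = α * a i * (∑ j, a j * v j) + γ * v i + δ * w i * (∑ j, w j * v j)
        + ε * (∑ j, H i j * v j) := by
    intro i
    simp only [Matrix.mulVec, dotProduct, Matrix.of_apply, add_mul]
    rw [Finset.sum_add_distrib, Finset.sum_add_distrib, Finset.sum_add_distrib, hite i]
    have e1 : ∑ j, α * a i * a j * v j = α * a i * ∑ j, a j * v j := by
      rw [Finset.mul_sum]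
      exact Finset.sum_congr rfl fun j _ => by ring
    have e2 : ∑ j, δ * w i * w j * v j = δ * w i * ∑ j, w j * v j := by
      rw [Finset.mul_sum]
      exact Finset.sum_congr rfl fun j _ => by ring
    have e3 : ∑ j, ε * H i j * v j = ε * ∑ j, H i j * v j := by
      rw [Finset.mul_sum]
      exact Finset.sum_congr rfl fun j _ => by ring
    rw [e1, e2, e3]
  unfold quadForm
  calc ∑ i, (Matrix.of fun i j =>
        α * a i * a j + (if i = j then γ else 0) + δ * w i * w j + ε * H i j).mulVec v i * v i
      = ∑ i, (α * (∑ j, a j * v j) * (a i * v i) + γ * v i ^ 2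
          + δ * (∑ j, w j * v j) * (w i * v i) + ε * ((∑ j, H i j * v j) * v i)) :=
        Finset.sum_congr rfl fun i _ => by rw [hrow i]; ring
    _ = _ := by
        rw [Finset.sum_add_distrib, Finset.sum_add_distrib, Finset.sum_add_distrib,
          ← Finset.mul_sum, ← Finset.mul_sum, ← Finset.mul_sum, ← Finset.mul_sum]
        unfold Matrix.mulVec dotProduct
        ring


lemma trace_abs_bound {n : ℕ} (H : Matrix (Fin n) (Fin n) ℝ) (K : ℝ)
    (hH : ∀ i j, |H i j| ≤ K) : |Matrix.trace H| ≤ (n : ℝ) * K := by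
  calc |Matrix.trace H| ≤ ∑ i, |H i i| := Finset.abs_sum_le_sum_abs _ _
    _ ≤ ∑ _i : Fin n, K := Finset.sum_le_sum fun i _ => hH i i
    _ = (n : ℝ) * K := by simp [Finset.sum_const, Finset.card_univ, mul_comm]

lemma quad_abs_bound {n : ℕ} (H : Matrix (Fin n) (Fin n) ℝ) (v : Fin n → ℝ) (K s : ℝ)
    (hK : 0 ≤ K) (hs : 0 ≤ s) (hH : ∀ i j, |H i j| ≤ K) (hv : ∀ i, |v i| ≤ s) :
    |quadForm H v| ≤ (n : ℝ) ^ 2 * K * s ^ 2 := by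
  have hrow : ∀ i, |H.mulVec v i| ≤ (n : ℝ) * (K * s) := by
    intro i
    calc |H.mulVec v i| = |∑ j, H i j * v j| := by rw [Matrix.mulVec, dotProduct]
      _ ≤ ∑ j, |H i j * v j| := Finset.abs_sum_le_sum_abs _ _
      _ ≤ ∑ _j : Fin n, K * s := by
          refine Finset.sum_le_sum fun j _ => ?_
          rw [abs_mul]
          exact mul_le_mul (hH i j) (hv j) (abs_nonneg _) hK
      _ = (n : ℝ) * (K * s) := by simp [Finset.sum_const, Finset.card_univ, mul_comm]
  calc |quadForm H v| ≤ ∑ i, |H.mulVec v i * v i| := Finset.abs_sum_le_sum_abs _ _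
    _ ≤ ∑ _i : Fin n, (n : ℝ) * (K * s) * s := by
        refine Finset.sum_le_sum fun i _ => ?_
        rw [abs_mul]
        exact mul_le_mul (hrow i) (hv i) (abs_nonneg _)
          (by positivity)
    _ = (n : ℝ) * ((n : ℝ) * (K * s) * s) := by simp [Finset.sum_const, Finset.card_univ]
    _ = (n : ℝ) ^ 2 * K * s ^ 2 := by ring

lemma hF_lemma (p m s WX : ℝ) (hp : 1 < p) (hm1 : m ≤ 1) (hmp : m ≤ p - 1)
    (hWX : WX ^ 2 ≤ s ^ 2) : m * s ^ 2 ≤ s ^ 2 + (p - 2) * WX ^ 2 := by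
  rcases le_or_gt 2 p with h2 | h2
  · nlinarith [sq_nonneg WX, sq_nonneg s]
  · nlinarith [sq_nonneg WX, sq_nonneg s]

lemma final_arith (n : ℕ) (p β M₁ M₂ K dx r s AX WX QH trH P m c A₁ A₂ : ℝ)
    (hp : 1 < p) (hβ0 : 0 < β) (hβ1 : β < 1) (hM₁ : 0 < M₁) (hK : 0 < K)
    (hn : (1:ℝ) ≤ (n:ℝ))
    (hP : P = |p - 2|) (hm : m = min (p - 1) 1) (hc : c = m * (1 - β))
    (hA₁ : A₁ = M₁ * (2 * (1 + P) + ((n : ℝ) + P)))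
    (hA₂ : A₂ = K * ((n : ℝ) + P * (n : ℝ) ^ 2))
    (hdx : 0 < dx) (hrd : dx ≤ r)
    (hM₂1 : 2 * M₁ + 1 ≤ M₂) (hM₂A : 4 * A₁ / c + 1 ≤ M₂) (hdxρ : dx ≤ c / (4 * A₂))
    (hslow : M₂ / 2 * dx ^ (β - 1) ≤ s) (hsup : s ≤ 2 * M₂ * dx ^ (β - 1))
    (hAX : AX ^ 2 ≤ r ^ 2 * s ^ 2) (hWX : WX ^ 2 ≤ s ^ 2)
    (hQH : |QH| ≤ (n : ℝ) ^ 2 * K * s ^ 2) (htrH : |trH| ≤ (n : ℝ) * K) :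
    s ^ (p - 2) * ((M₁ * (β - 2) * r ^ (β - 4)) * r ^ 2 + (n : ℝ) * (M₁ * r ^ (β - 2))
        + (M₂ * (β - 1) * dx ^ (β - 2)) * 1 + (M₂ * dx ^ (β - 1)) * trH)
      + (p - 2) * s ^ (p - 4) * ((M₁ * (β - 2) * r ^ (β - 4)) * AX ^ 2
        + (M₁ * r ^ (β - 2)) * s ^ 2 + (M₂ * (β - 1) * dx ^ (β - 2)) * WX ^ 2
        + (M₂ * dx ^ (β - 1)) * QH)
      ≤ (m / 2 * (2:ℝ) ^ (-P)) * (β - 1) * M₂ ^ (p - 1) * dx ^ (β * (p - 1) - p) := by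
  have hr0 : 0 < r := lt_of_lt_of_le hdx hrd
  have hP0 : 0 ≤ P := hP ▸ abs_nonneg _
  have hm0 : 0 < m := hm ▸ lt_min (by linarith) one_pos
  have hm1 : m ≤ 1 := hm ▸ min_le_right _ _
  have hmp : m ≤ p - 1 := hm ▸ min_le_left _ _
  have hc0 : 0 < c := hc ▸ mul_pos hm0 (by linarith)
  have hA₁0 : 0 < A₁ := hA₁ ▸ mul_pos hM₁ (by linarith only [hP0, hn])
  have hA₂0 : 0 < A₂ := hA₂ ▸ mul_pos hK (by
    have h9 : (0:ℝ) ≤ P * (n:ℝ) ^ 2 := by positivity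
    linarith only [h9, hn])
  have hM₂0 : 0 < M₂ := by linarith only [hM₂1, hM₁]
  have hD2 : (0:ℝ) < dx ^ (β - 2) := Real.rpow_pos_of_pos hdx _
  have hD1 : (0:ℝ) < dx ^ (β - 1) := Real.rpow_pos_of_pos hdx _
  have hR2 : (0:ℝ) < r ^ (β - 2) := Real.rpow_pos_of_pos hr0 _
  have hR4 : (0:ℝ) < r ^ (β - 4) := Real.rpow_pos_of_pos hr0 _
  have hs0 : 0 < s := lt_of_lt_of_le (by positivity) hslow
  have hR2D2 : r ^ (β - 2) ≤ dx ^ (β - 2) :=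
    Real.rpow_le_rpow_of_nonpos hdx hrd (by linarith)
  have hR4r2 : r ^ (β - 4) * r ^ 2 = r ^ (β - 2) := by
    rw [show (r:ℝ) ^ 2 = r ^ (2:ℝ) from (Real.rpow_two r).symm, ← Real.rpow_add hr0]
    ring_nf
  have hD1D2 : dx ^ (β - 1) = dx ^ (β - 2) * dx := by
    rw [show β - 1 = (β - 2) + 1 by ring, Real.rpow_add hdx, Real.rpow_one]
  have hsplit : s ^ (p - 2) = s ^ (p - 4) * s ^ 2 := by
    rw [show (s:ℝ) ^ 2 = s ^ (2:ℝ) from (Real.rpow_two s).symm, ← Real.rpow_add hs0]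
    ring_nf
  have hsp4 : (0:ℝ) < s ^ (p - 4) := Real.rpow_pos_of_pos hs0 _
  -- the main bound on T
  have hb1 : (M₁ * (β - 2) * r ^ (β - 4)) * (r ^ 2 * s ^ 2 + (p - 2) * AX ^ 2)
      ≤ 2 * M₁ * (1 + P) * dx ^ (β - 2) * s ^ 2 := by
    have h1 : |r ^ 2 * s ^ 2 + (p - 2) * AX ^ 2| ≤ (1 + P) * (r ^ 2 * s ^ 2) := by
      have habs : |(p - 2) * AX ^ 2| ≤ P * (r ^ 2 * s ^ 2) := by
        rw [abs_mul, ← hP, abs_of_nonneg (sq_nonneg AX)]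
        exact mul_le_mul le_rfl hAX (sq_nonneg _) hP0
      calc |r ^ 2 * s ^ 2 + (p - 2) * AX ^ 2| ≤ |r ^ 2 * s ^ 2| + |(p - 2) * AX ^ 2| :=
            abs_add_le _ _
        _ ≤ r ^ 2 * s ^ 2 + P * (r ^ 2 * s ^ 2) := by
            rw [abs_of_nonneg (by positivity)]; linarith
        _ = (1 + P) * (r ^ 2 * s ^ 2) := by ring
    calc (M₁ * (β - 2) * r ^ (β - 4)) * (r ^ 2 * s ^ 2 + (p - 2) * AX ^ 2)
        ≤ |(M₁ * (β - 2) * r ^ (β - 4)) * (r ^ 2 * s ^ 2 + (p - 2) * AX ^ 2)| := le_abs_self _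
      _ = (M₁ * (2 - β) * r ^ (β - 4)) * |r ^ 2 * s ^ 2 + (p - 2) * AX ^ 2| := by
          rw [abs_mul]
          congr 1
          rw [abs_of_nonpos (by
            rw [show M₁ * (β - 2) * r ^ (β - 4) = (β - 2) * (M₁ * r ^ (β - 4)) by ring]
            exact mul_nonpos_iff.2 (Or.inr ⟨by linarith only [hβ1], (mul_pos hM₁ hR4).le⟩))]
          ring
      _ ≤ (M₁ * (2 - β) * r ^ (β - 4)) * ((1 + P) * (r ^ 2 * s ^ 2)) := by
          exact mul_le_mul_of_nonneg_left h1 (mul_nonneg (mul_nonneg hM₁.le (by linarith only [hβ1])) hR4.le)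
      _ = M₁ * (1 + P) * s ^ 2 * ((2 - β) * (r ^ (β - 4) * r ^ 2)) := by ring
      _ = M₁ * (1 + P) * s ^ 2 * ((2 - β) * r ^ (β - 2)) := by rw [hR4r2]
      _ ≤ M₁ * (1 + P) * s ^ 2 * (2 * dx ^ (β - 2)) := by
          apply mul_le_mul_of_nonneg_left _ (by positivity)
          exact mul_le_mul (by linarith) hR2D2 hR2.le (by norm_num)
      _ = 2 * M₁ * (1 + P) * dx ^ (β - 2) * s ^ 2 := by ring
  have hb2 : (M₁ * r ^ (β - 2)) * (((n:ℝ) + (p - 2)) * s ^ 2)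
      ≤ M₁ * ((n:ℝ) + P) * dx ^ (β - 2) * s ^ 2 := by
    have h1 : ((n:ℝ) + (p - 2)) * s ^ 2 ≤ ((n:ℝ) + P) * s ^ 2 := by
      apply mul_le_mul_of_nonneg_right _ (sq_nonneg s)
      have := le_abs_self (p - 2)
      rw [← hP] at this
      linarith
    calc (M₁ * r ^ (β - 2)) * (((n:ℝ) + (p - 2)) * s ^ 2)
        ≤ (M₁ * r ^ (β - 2)) * (((n:ℝ) + P) * s ^ 2) :=
          mul_le_mul_of_nonneg_left h1 (by positivity)
      _ = (((n:ℝ) + P) * s ^ 2 * M₁) * r ^ (β - 2) := by ring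
      _ ≤ (((n:ℝ) + P) * s ^ 2 * M₁) * dx ^ (β - 2) := by
          apply mul_le_mul_of_nonneg_left hR2D2 (by positivity)
      _ = M₁ * ((n:ℝ) + P) * dx ^ (β - 2) * s ^ 2 := by ring
  have hb3 : (M₂ * (β - 1) * dx ^ (β - 2)) * (s ^ 2 + (p - 2) * WX ^ 2)
      ≤ -(c * M₂ * dx ^ (β - 2) * s ^ 2) := by
    have hF : m * s ^ 2 ≤ s ^ 2 + (p - 2) * WX ^ 2 := hF_lemma p m s WX hp hm1 hmp hWX
    have hcoef : M₂ * (β - 1) * dx ^ (β - 2) ≤ 0 := by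
      rw [show M₂ * (β - 1) * dx ^ (β - 2) = (β - 1) * (M₂ * dx ^ (β - 2)) by ring]
      exact mul_nonpos_iff.2 (Or.inr ⟨by linarith only [hβ1], (mul_pos hM₂0 hD2).le⟩)
    calc (M₂ * (β - 1) * dx ^ (β - 2)) * (s ^ 2 + (p - 2) * WX ^ 2)
        ≤ (M₂ * (β - 1) * dx ^ (β - 2)) * (m * s ^ 2) := by
          exact mul_le_mul_of_nonpos_left hF hcoef
      _ = -((m * (1 - β)) * M₂ * dx ^ (β - 2) * s ^ 2) := by ring
      _ = -(c * M₂ * dx ^ (β - 2) * s ^ 2) := by rw [hc]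
  have hb4 : (M₂ * dx ^ (β - 1)) * (s ^ 2 * trH + (p - 2) * QH)
      ≤ A₂ * dx * M₂ * dx ^ (β - 2) * s ^ 2 := by
    have h1 : |s ^ 2 * trH + (p - 2) * QH| ≤ A₂ / K * K * s ^ 2 := by
      have e1 : |s ^ 2 * trH| ≤ (n:ℝ) * K * s ^ 2 := by
        rw [abs_mul, abs_of_nonneg (sq_nonneg s)]
        calc s ^ 2 * |trH| ≤ s ^ 2 * ((n:ℝ) * K) :=
              mul_le_mul_of_nonneg_left htrH (sq_nonneg s)
          _ = (n:ℝ) * K * s ^ 2 := by ring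
      have e2 : |(p - 2) * QH| ≤ P * ((n:ℝ) ^ 2 * K * s ^ 2) := by
        rw [abs_mul, ← hP]
        exact mul_le_mul le_rfl hQH (abs_nonneg _) hP0
      calc |s ^ 2 * trH + (p - 2) * QH| ≤ |s ^ 2 * trH| + |(p - 2) * QH| := abs_add_le _ _
        _ ≤ (n:ℝ) * K * s ^ 2 + P * ((n:ℝ) ^ 2 * K * s ^ 2) := by linarith
        _ = A₂ / K * K * s ^ 2 := by rw [hA₂]; field_simp
    calc (M₂ * dx ^ (β - 1)) * (s ^ 2 * trH + (p - 2) * QH)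
        ≤ (M₂ * dx ^ (β - 1)) * |s ^ 2 * trH + (p - 2) * QH| := by
          apply mul_le_mul_of_nonneg_left (le_abs_self _) (by positivity)
      _ ≤ (M₂ * dx ^ (β - 1)) * (A₂ / K * K * s ^ 2) := by
          apply mul_le_mul_of_nonneg_left h1 (by positivity)
      _ = (M₂ * (dx ^ (β - 2) * dx)) * (A₂ / K * K * s ^ 2) := by rw [← hD1D2]
      _ = A₂ * dx * M₂ * dx ^ (β - 2) * s ^ 2 := by field_simp
  -- combine
  have hA1M : A₁ ≤ c / 4 * M₂ := by
    have h1 : (4 * A₁ / c + 1) * c ≤ M₂ * c := mul_le_mul_of_nonneg_right hM₂A hc0.le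
    rw [add_mul, div_mul_cancel₀ _ hc0.ne', one_mul] at h1
    nlinarith [h1, hc0, hM₂0]
  have hA2dx : A₂ * dx ≤ c / 4 := by
    have h1 : A₂ * (c / (4 * A₂)) = c / 4 := by field_simp
    calc A₂ * dx ≤ A₂ * (c / (4 * A₂)) := mul_le_mul_of_nonneg_left hdxρ hA₂0.le
      _ = c / 4 := h1
  have hT : s ^ 2 * ((M₁ * (β - 2) * r ^ (β - 4)) * r ^ 2 + (n : ℝ) * (M₁ * r ^ (β - 2))
        + (M₂ * (β - 1) * dx ^ (β - 2)) * 1 + (M₂ * dx ^ (β - 1)) * trH)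
      + (p - 2) * ((M₁ * (β - 2) * r ^ (β - 4)) * AX ^ 2
        + (M₁ * r ^ (β - 2)) * s ^ 2 + (M₂ * (β - 1) * dx ^ (β - 2)) * WX ^ 2
        + (M₂ * dx ^ (β - 1)) * QH)
      ≤ -(c / 2 * M₂ * dx ^ (β - 2) * s ^ 2) := by
    have hsum := add_le_add (add_le_add (add_le_add hb1 hb2) hb3) hb4
    have h3 : A₁ + A₂ * dx * M₂ - c * M₂ ≤ -(c / 2 * M₂) := by
      have h2 : A₂ * dx * M₂ ≤ c / 4 * M₂ := mul_le_mul_of_nonneg_right hA2dx hM₂0.le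
      linarith only [hA1M, h2]
    have h4 := mul_le_mul_of_nonneg_right h3
      (by positivity : (0:ℝ) ≤ dx ^ (β - 2) * s ^ 2)
    have heq : 2 * M₁ * (1 + P) * dx ^ (β - 2) * s ^ 2
        + M₁ * ((n:ℝ) + P) * dx ^ (β - 2) * s ^ 2 + -(c * M₂ * dx ^ (β - 2) * s ^ 2)
        + A₂ * dx * M₂ * dx ^ (β - 2) * s ^ 2
        = (A₁ + A₂ * dx * M₂ - c * M₂) * (dx ^ (β - 2) * s ^ 2) := by
      rw [hA₁]; ring
    calc s ^ 2 * ((M₁ * (β - 2) * r ^ (β - 4)) * r ^ 2 + (n : ℝ) * (M₁ * r ^ (β - 2))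
          + (M₂ * (β - 1) * dx ^ (β - 2)) * 1 + (M₂ * dx ^ (β - 1)) * trH)
        + (p - 2) * ((M₁ * (β - 2) * r ^ (β - 4)) * AX ^ 2
          + (M₁ * r ^ (β - 2)) * s ^ 2 + (M₂ * (β - 1) * dx ^ (β - 2)) * WX ^ 2
          + (M₂ * dx ^ (β - 1)) * QH)
        = (M₁ * (β - 2) * r ^ (β - 4)) * (r ^ 2 * s ^ 2 + (p - 2) * AX ^ 2)
          + (M₁ * r ^ (β - 2)) * (((n:ℝ) + (p - 2)) * s ^ 2)
          + (M₂ * (β - 1) * dx ^ (β - 2)) * (s ^ 2 + (p - 2) * WX ^ 2)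
          + (M₂ * dx ^ (β - 1)) * (s ^ 2 * trH + (p - 2) * QH) := by ring
      _ ≤ 2 * M₁ * (1 + P) * dx ^ (β - 2) * s ^ 2
          + M₁ * ((n:ℝ) + P) * dx ^ (β - 2) * s ^ 2 + -(c * M₂ * dx ^ (β - 2) * s ^ 2)
          + A₂ * dx * M₂ * dx ^ (β - 2) * s ^ 2 := hsum
      _ = (A₁ + A₂ * dx * M₂ - c * M₂) * (dx ^ (β - 2) * s ^ 2) := heq
      _ ≤ -(c / 2 * M₂) * (dx ^ (β - 2) * s ^ 2) := h4
      _ = -(c / 2 * M₂ * dx ^ (β - 2) * s ^ 2) := by ring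
  -- lower bound for s ^ (p - 2)
  have hsp : (2:ℝ) ^ (-P) * M₂ ^ (p - 2) * dx ^ ((β - 1) * (p - 2)) ≤ s ^ (p - 2) := by
    have hdb : dx ^ ((β - 1) * (p - 2)) = (dx ^ (β - 1)) ^ (p - 2) :=
      Real.rpow_mul hdx.le _ _
    rcases le_or_gt 2 p with h2 | h2
    · have hPval : P = p - 2 := by rw [hP, abs_of_nonneg (by linarith)]
      have h3 : (M₂ / 2 * dx ^ (β - 1)) ^ (p - 2) ≤ s ^ (p - 2) :=
        Real.rpow_le_rpow (by positivity) hslow (by linarith)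
      have h4 : (M₂ / 2 * dx ^ (β - 1)) ^ (p - 2)
          = (2:ℝ) ^ (-P) * M₂ ^ (p - 2) * dx ^ ((β - 1) * (p - 2)) := by
        rw [Real.mul_rpow (by positivity) (by positivity), Real.div_rpow hM₂0.le (by norm_num),
          hdb, Real.rpow_neg (by norm_num), hPval]
        ring
      linarith only [h3, h4]
    · have hPval : P = 2 - p := by rw [hP, abs_of_nonpos (by linarith)]; ring
      have h3 : (2 * M₂ * dx ^ (β - 1)) ^ (p - 2) ≤ s ^ (p - 2) :=
        Real.rpow_le_rpow_of_nonpos hs0 hsup (by linarith)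
      have h5 : (2:ℝ) ^ (p - 2) = (2:ℝ) ^ (-P) := by
        rw [hPval]
        congr 1
        ring
      have h4 : (2 * M₂ * dx ^ (β - 1)) ^ (p - 2)
          = (2:ℝ) ^ (-P) * M₂ ^ (p - 2) * dx ^ ((β - 1) * (p - 2)) := by
        rw [Real.mul_rpow (by positivity) (by positivity),
          Real.mul_rpow (by norm_num) hM₂0.le, ← hdb, h5]
      linarith only [h3, h4]
  -- conclude
  calc s ^ (p - 2) * ((M₁ * (β - 2) * r ^ (β - 4)) * r ^ 2 + (n : ℝ) * (M₁ * r ^ (β - 2))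
        + (M₂ * (β - 1) * dx ^ (β - 2)) * 1 + (M₂ * dx ^ (β - 1)) * trH)
      + (p - 2) * s ^ (p - 4) * ((M₁ * (β - 2) * r ^ (β - 4)) * AX ^ 2
        + (M₁ * r ^ (β - 2)) * s ^ 2 + (M₂ * (β - 1) * dx ^ (β - 2)) * WX ^ 2
        + (M₂ * dx ^ (β - 1)) * QH)
      = s ^ (p - 4) * (s ^ 2 * ((M₁ * (β - 2) * r ^ (β - 4)) * r ^ 2
          + (n : ℝ) * (M₁ * r ^ (β - 2))
          + (M₂ * (β - 1) * dx ^ (β - 2)) * 1 + (M₂ * dx ^ (β - 1)) * trH)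
        + (p - 2) * ((M₁ * (β - 2) * r ^ (β - 4)) * AX ^ 2
          + (M₁ * r ^ (β - 2)) * s ^ 2 + (M₂ * (β - 1) * dx ^ (β - 2)) * WX ^ 2
          + (M₂ * dx ^ (β - 1)) * QH)) := by
        rw [hsplit]; ring
    _ ≤ s ^ (p - 4) * (-(c / 2 * M₂ * dx ^ (β - 2) * s ^ 2)) :=
        mul_le_mul_of_nonneg_left hT hsp4.le
    _ = -(c / 2 * M₂ * dx ^ (β - 2)) * (s ^ (p - 4) * s ^ 2) := by ring
    _ = -(c / 2 * M₂ * dx ^ (β - 2)) * s ^ (p - 2) := by rw [← hsplit]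
    _ ≤ -(c / 2 * M₂ * dx ^ (β - 2))
        * ((2:ℝ) ^ (-P) * M₂ ^ (p - 2) * dx ^ ((β - 1) * (p - 2))) :=
        mul_le_mul_of_nonpos_left hsp (neg_nonpos.2 (by positivity))
    _ = (m / 2 * (2:ℝ) ^ (-P)) * (β - 1) * M₂ ^ (p - 1) * dx ^ (β * (p - 1) - p) := by
        rw [show β * (p - 1) - p = (β - 2) + (β - 1) * (p - 2) by ring, Real.rpow_add hdx,
          show p - 1 = (p - 2) + 1 by ring, Real.rpow_add hM₂0, Real.rpow_one, hc]
        ring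


/-- **Lemma 3.2** (barrier estimate for the `p`-Laplacian near a `C²` boundary). -/
theorem barrier_estimate
    (n : ℕ) (hn : 1 ≤ n) (p β M₁ : ℝ) (hp : 1 < p) (hβ : β ∈ Set.Ioo (0 : ℝ) 1)
    (hM₁ : 0 < M₁)
    (Ω : Set (EuclideanSpace ℝ (Fin n))) (hΩo : IsOpen Ω) (hΩb : Bornology.IsBounded Ω)
    (ρ K : ℝ) (hρ : 0 < ρ) (hK : 0 < K)
    (hd2 : ContDiffOn ℝ 2 (distFn n Ω) {x ∈ Ω | distFn n Ω x < ρ})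
    (hgrad : ∀ x ∈ {x ∈ Ω | distFn n Ω x < ρ}, ‖gradient (distFn n Ω) x‖ = 1)
    (hhess : ∀ x ∈ {x ∈ Ω | distFn n Ω x < ρ}, ∀ i j, |hessMat n (distFn n Ω) x i j| ≤ K) :
    ∃ M₀ > M₁, ∃ ρ₀ ∈ Set.Ioo (0 : ℝ) (min ρ 1), ∃ κp > (0 : ℝ),
      ∀ M₂ ≥ M₀, ∀ y ∈ frontier Ω, ∀ x ∈ Ω,
        0 < distFn n Ω x → distFn n Ω x ≤ ρ₀ →
        ContDiffAt ℝ 2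
          (fun x' => M₁ / β * ‖x' - y‖ ^ β + M₂ / β * (distFn n Ω x') ^ β) x ∧
        gradient (fun x' => M₁ / β * ‖x' - y‖ ^ β + M₂ / β * (distFn n Ω x') ^ β) x =
          (M₁ * ‖x - y‖ ^ (β - 2)) • (x - y) +
            (M₂ * (distFn n Ω x) ^ (β - 1)) • gradient (distFn n Ω) x ∧
        gradient (fun x' => M₁ / β * ‖x' - y‖ ^ β + M₂ / β * (distFn n Ω x') ^ β) x ≠ 0 ∧
        Fsym n p
            (gradient (fun x' => M₁ / β * ‖x' - y‖ ^ β + M₂ / β * (distFn n Ω x') ^ β) x)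
            (hessMat n (fun x' => M₁ / β * ‖x' - y‖ ^ β + M₂ / β * (distFn n Ω x') ^ β) x)
          ≤ κp * (β - 1) * M₂ ^ (p - 1) * (distFn n Ω x) ^ (β * (p - 1) - p) := by
  obtain ⟨hβ0, hβ1⟩ := hβ
  -- constants
  set P : ℝ := |p - 2| with hPdef
  have hP : 0 ≤ P := abs_nonneg _
  set m : ℝ := min (p - 1) 1 with hmdef
  have hm0 : 0 < m := lt_min (by linarith) one_pos
  have hm1 : m ≤ 1 := min_le_right _ _
  have hmp : m ≤ p - 1 := min_le_left _ _
  set c : ℝ := m * (1 - β) with hcdef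
  have hc : 0 < c := mul_pos hm0 (by linarith)
  set A₁ : ℝ := M₁ * (2 * (1 + P) + ((n : ℝ) + P)) with hA₁def
  have hA₁ : 0 < A₁ := by
    have h1 : (1:ℝ) ≤ (n:ℝ) := by exact_mod_cast hn
    exact mul_pos hM₁ (by linarith only [hP, h1])
  set A₂ : ℝ := K * ((n : ℝ) + P * (n : ℝ) ^ 2) with hA₂def
  have hA₂ : 0 < A₂ := by
    have h1 : (1:ℝ) ≤ (n:ℝ) := by exact_mod_cast hn
    have h9 : (0:ℝ) ≤ P * (n:ℝ) ^ 2 := by positivity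
    exact mul_pos hK (by linarith only [h9, h1])
  refine ⟨max (2 * M₁ + 1) (4 * A₁ / c + 1), ?_,
    min (c / (4 * A₂)) (min ρ 1 / 2), ?_, m / 2 * (2:ℝ) ^ (-P), ?_, ?_⟩
  · exact lt_of_lt_of_le (by linarith) (le_max_left _ _)
  · constructor
    · exact lt_min (by positivity) (by positivity)
    · exact lt_of_le_of_lt (min_le_right _ _) (by simp [lt_min_iff]; constructor <;> linarith [min_le_left ρ 1, min_le_right ρ 1, lt_min hρ one_pos])
  · positivity
  intro M₂ hM₂ y hy x hx hdx hdρ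
  -- basic facts about the geometry
  have hyΩc : y ∈ Ωᶜ := by
    rw [hΩo.frontier_eq] at hy
    exact hy.2
  have hM₂1 : 2 * M₁ + 1 ≤ M₂ := le_trans (le_max_left _ _) hM₂
  have hM₂A : 4 * A₁ / c + 1 ≤ M₂ := le_trans (le_max_right _ _) hM₂
  have hM₂0 : 0 < M₂ := by linarith
  have hρ₀1 : distFn n Ω x ≤ c / (4 * A₂) := le_trans hdρ (min_le_left _ _)
  have hρ₀2 : distFn n Ω x < ρ :=
    lt_of_le_of_lt (le_trans hdρ (min_le_right _ _))
      (by linarith [min_le_left ρ 1, lt_min hρ one_pos])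
  set U : Set (EuclideanSpace ℝ (Fin n)) := {x ∈ Ω | distFn n Ω x < ρ} with hUdef
  have hUopen : IsOpen U := by
    have hcont : Continuous (distFn n Ω) := continuous_infDist_pt _
    have h1 : U = Ω ∩ {z | distFn n Ω z < ρ} := rfl
    rw [h1]
    exact hΩo.inter (isOpen_lt hcont continuous_const)
  have hxU : x ∈ U := ⟨hx, hρ₀2⟩
  have hdpos : ∀ z ∈ U, 0 < distFn n Ω z := by
    intro z hz
    exact (hΩo.isClosed_compl.notMem_iff_infDist_pos ⟨y, hyΩc⟩).1 (by simp [hz.1])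
  have hneU : ∀ z ∈ U, z ≠ y := by
    intro z hz h
    exact hyΩc (h ▸ hz.1)
  have hxy : x ≠ y := hneU x hxU
  have hrdx : distFn n Ω x ≤ ‖x - y‖ := by
    rw [← dist_eq_norm]
    exact Metric.infDist_le_dist_of_mem hyΩc
  have hr0 : 0 < ‖x - y‖ := lt_of_lt_of_le hdx hrdx
  have hdCx : ContDiffAt ℝ 2 (distFn n Ω) x := hd2.contDiffAt (hUopen.mem_nhds hxU)
  have hψC : ContDiffAt ℝ 2
      (fun x' => M₁ / β * ‖x' - y‖ ^ β + M₂ / β * (distFn n Ω x') ^ β) x :=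
    barrier_contDiffAt hdx hxy hdCx
  -- the gradient
  have hDer := barrier_hasFDerivAt (M₁ := M₁) (M₂ := M₂) hβ0 hdx hxy
    (hdCx.differentiableAt two_ne_zero).hasFDerivAt
  have hdual : (InnerProductSpace.toDual ℝ (EuclideanSpace ℝ (Fin n)))
      ((M₁ * ‖x - y‖ ^ (β - 2)) • (x - y)
        + (M₂ * (distFn n Ω x) ^ (β - 1)) • gradient (distFn n Ω) x)
      = (M₁ * ‖x - y‖ ^ (β - 2)) • (innerSL ℝ (x - y))
        + (M₂ * (distFn n Ω x) ^ (β - 1)) • fderiv ℝ (distFn n Ω) x := by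
    ext v
    have hgi : ⟪gradient (distFn n Ω) x, v⟫ = fderiv ℝ (distFn n Ω) x v := by
      rw [gradient, InnerProductSpace.toDual_symm_apply]
    simp only [InnerProductSpace.toDual_apply_apply, inner_add_left, real_inner_smul_left,
      ContinuousLinearMap.add_apply, ContinuousLinearMap.coe_smul', Pi.smul_apply,
      innerSL_apply_apply, smul_eq_mul, hgi]
  have hgradAt : HasGradientAt
      (fun x' => M₁ / β * ‖x' - y‖ ^ β + M₂ / β * (distFn n Ω x') ^ β)
      ((M₁ * ‖x - y‖ ^ (β - 2)) • (x - y)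
        + (M₂ * (distFn n Ω x) ^ (β - 1)) • gradient (distFn n Ω) x) x := by
    rw [hasGradientAt_iff_hasFDerivAt, hdual]
    exact hDer
  have hgrad_eq := hgradAt.gradient
  set Gv : EuclideanSpace ℝ (Fin n) := (M₁ * ‖x - y‖ ^ (β - 2)) • (x - y)
      + (M₂ * (distFn n Ω x) ^ (β - 1)) • gradient (distFn n Ω) x with hGv
  -- quantitative bounds on ‖Gv‖
  have hw1 : ‖gradient (distFn n Ω) x‖ = 1 := hgrad x hxU
  have hD1pos : (0:ℝ) < (distFn n Ω x) ^ (β - 1) := Real.rpow_pos_of_pos hdx _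
  have hrb1 : ‖x - y‖ ^ (β - 2) * ‖x - y‖ = ‖x - y‖ ^ (β - 1) := by
    rw [show β - 1 = (β - 2) + 1 by ring, Real.rpow_add hr0, Real.rpow_one]
  have hRd : ‖x - y‖ ^ (β - 1) ≤ (distFn n Ω x) ^ (β - 1) :=
    Real.rpow_le_rpow_of_nonpos hdx hrdx (by linarith)
  have hnorm1 : ‖(M₁ * ‖x - y‖ ^ (β - 2)) • (x - y)‖ = M₁ * ‖x - y‖ ^ (β - 1) := by
    rw [norm_smul, Real.norm_eq_abs,
      abs_of_pos (mul_pos hM₁ (Real.rpow_pos_of_pos hr0 _)), mul_assoc, hrb1]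
  have hnorm2 : ‖(M₂ * (distFn n Ω x) ^ (β - 1)) • gradient (distFn n Ω) x‖
      = M₂ * (distFn n Ω x) ^ (β - 1) := by
    rw [norm_smul, Real.norm_eq_abs, abs_of_pos (mul_pos hM₂0 hD1pos), hw1, mul_one]
  have h3 : M₁ * ‖x - y‖ ^ (β - 1) ≤ M₁ * (distFn n Ω x) ^ (β - 1) :=
    mul_le_mul_of_nonneg_left hRd hM₁.le
  have h5 : M₁ * (distFn n Ω x) ^ (β - 1) ≤ M₂ / 2 * (distFn n Ω x) ^ (β - 1) :=
    mul_le_mul_of_nonneg_right (by linarith) hD1pos.le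
  have hslow : M₂ / 2 * (distFn n Ω x) ^ (β - 1) ≤ ‖Gv‖ := by
    have h6 : M₂ * (distFn n Ω x) ^ (β - 1) ≤ ‖Gv‖ + M₁ * ‖x - y‖ ^ (β - 1) := by
      calc M₂ * (distFn n Ω x) ^ (β - 1)
          = ‖Gv - (M₁ * ‖x - y‖ ^ (β - 2)) • (x - y)‖ := by
            rw [hGv, add_sub_cancel_left, hnorm2]
        _ ≤ ‖Gv‖ + ‖(M₁ * ‖x - y‖ ^ (β - 2)) • (x - y)‖ := norm_sub_le _ _
        _ = ‖Gv‖ + M₁ * ‖x - y‖ ^ (β - 1) := by rw [hnorm1]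
    linarith
  have hs0 : 0 < ‖Gv‖ :=
    lt_of_lt_of_le (mul_pos (by linarith) hD1pos) hslow
  have hsup : ‖Gv‖ ≤ 2 * M₂ * (distFn n Ω x) ^ (β - 1) := by
    calc ‖Gv‖ ≤ ‖(M₁ * ‖x - y‖ ^ (β - 2)) • (x - y)‖
          + ‖(M₂ * (distFn n Ω x) ^ (β - 1)) • gradient (distFn n Ω) x‖ := norm_add_le _ _
      _ = M₁ * ‖x - y‖ ^ (β - 1) + M₂ * (distFn n Ω x) ^ (β - 1) := by rw [hnorm1, hnorm2]
      _ ≤ 2 * M₂ * (distFn n Ω x) ^ (β - 1) := by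
          have : M₂ / 2 * (distFn n Ω x) ^ (β - 1) ≤ M₂ * (distFn n Ω x) ^ (β - 1) :=
            mul_le_mul_of_nonneg_right (by linarith) hD1pos.le
          linarith
  refine ⟨hψC, hgrad_eq, ?_, ?_⟩
  · rw [hgrad_eq]
    intro h0
    rw [h0, norm_zero] at hs0
    exact lt_irrefl 0 hs0
  · rw [hgrad_eq]
    -- rewrite the Hessian
    have hX : hessMat n (fun x' => M₁ / β * ‖x' - y‖ ^ β + M₂ / β * (distFn n Ω x') ^ β) x
        = Matrix.of (fun i j =>
            M₁ * (β - 2) * ‖x - y‖ ^ (β - 4) * ((x - y) i) * ((x - y) j)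
            + (if i = j then M₁ * ‖x - y‖ ^ (β - 2) else 0)
            + M₂ * (β - 1) * (distFn n Ω x) ^ (β - 2)
                * fderiv ℝ (distFn n Ω) x (EuclideanSpace.single i 1)
                * fderiv ℝ (distFn n Ω) x (EuclideanSpace.single j 1)
            + M₂ * (distFn n Ω x) ^ (β - 1) * hessMat n (distFn n Ω) x i j) := by
      funext i j
      rw [Matrix.of_apply]
      exact barrier_hess hβ0 hUopen hxU hd2 hdpos hneU hψC i j
    rw [hX]
    unfold Fsym
    have htr := trace_decomp (M₁ * (β - 2) * ‖x - y‖ ^ (β - 4)) (M₁ * ‖x - y‖ ^ (β - 2))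
      (M₂ * (β - 1) * (distFn n Ω x) ^ (β - 2)) (M₂ * (distFn n Ω x) ^ (β - 1))
      (fun i => (x - y) i)
      (fun i => fderiv ℝ (distFn n Ω) x (EuclideanSpace.single i 1))
      (hessMat n (distFn n Ω) x)
    have hq := quad_decomp (M₁ * (β - 2) * ‖x - y‖ ^ (β - 4)) (M₁ * ‖x - y‖ ^ (β - 2))
      (M₂ * (β - 1) * (distFn n Ω x) ^ (β - 2)) (M₂ * (distFn n Ω x) ^ (β - 1))
      (fun i => (x - y) i)
      (fun i => fderiv ℝ (distFn n Ω) x (EuclideanSpace.single i 1))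
      (hessMat n (distFn n Ω) x) (fun i => Gv i)
    beta_reduce at htr hq
    rw [htr, hq]
    -- identify the sums
    have hSa : ∑ i, ((x - y) : EuclideanSpace ℝ (Fin n)) i ^ 2 = ‖x - y‖ ^ 2 :=
      (euc_norm_sq _).symm
    have hSv : ∑ i, Gv i ^ 2 = ‖Gv‖ ^ 2 := (euc_norm_sq _).symm
    have hSw : ∑ i, fderiv ℝ (distFn n Ω) x (EuclideanSpace.single i 1) ^ 2 = 1 := by
      calc ∑ i, fderiv ℝ (distFn n Ω) x (EuclideanSpace.single i 1) ^ 2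
          = ∑ i, gradient (distFn n Ω) x i ^ 2 :=
            Finset.sum_congr rfl fun i _ => by rw [gradient_coord]
        _ = ‖gradient (distFn n Ω) x‖ ^ 2 := (euc_norm_sq _).symm
        _ = 1 := by rw [hw1]; norm_num
    rw [hSa, hSv, hSw]
    -- Cauchy-Schwarz facts and bounds
    have hAX : (∑ i, ((x - y) : EuclideanSpace ℝ (Fin n)) i * Gv i) ^ 2
        ≤ ‖x - y‖ ^ 2 * ‖Gv‖ ^ 2 := by
      have h := Finset.sum_mul_sq_le_sq_mul_sq Finset.univ
        (fun i => ((x - y) : EuclideanSpace ℝ (Fin n)) i) (fun i => Gv i)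
      beta_reduce at h
      rwa [hSa, hSv] at h
    have hWX : (∑ i, fderiv ℝ (distFn n Ω) x (EuclideanSpace.single i 1) * Gv i) ^ 2
        ≤ ‖Gv‖ ^ 2 := by
      have h := Finset.sum_mul_sq_le_sq_mul_sq Finset.univ
        (fun i => fderiv ℝ (distFn n Ω) x (EuclideanSpace.single i 1)) (fun i => Gv i)
      beta_reduce at h
      rw [hSw, hSv, one_mul] at h
      exact h
    have hGvb : ∀ i, |Gv i| ≤ ‖Gv‖ := by
      intro i
      have h1 : Gv i ^ 2 ≤ ‖Gv‖ ^ 2 := by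
        rw [euc_norm_sq]
        exact Finset.single_le_sum (fun j _ => sq_nonneg (Gv j)) (Finset.mem_univ i)
      have h2 := Real.sqrt_le_sqrt h1
      rwa [Real.sqrt_sq_eq_abs, Real.sqrt_sq (norm_nonneg _)] at h2
    have hQH : |quadForm (hessMat n (distFn n Ω) x) (fun i => Gv i)|
        ≤ (n : ℝ) ^ 2 * K * ‖Gv‖ ^ 2 :=
      quad_abs_bound _ _ _ _ hK.le (norm_nonneg _) (hhess x hxU) hGvb
    have htrH : |Matrix.trace (hessMat n (distFn n Ω) x)| ≤ (n : ℝ) * K :=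
      trace_abs_bound _ _ (hhess x hxU)
    have hn' : (1:ℝ) ≤ (n : ℝ) := by exact_mod_cast hn
    have harith := final_arith n p β M₁ M₂ K (distFn n Ω x) ‖x - y‖ ‖Gv‖
      (∑ i, ((x - y) : EuclideanSpace ℝ (Fin n)) i * Gv i)
      (∑ i, fderiv ℝ (distFn n Ω) x (EuclideanSpace.single i 1) * Gv i)
      (quadForm (hessMat n (distFn n Ω) x) (fun i => Gv i))
      (Matrix.trace (hessMat n (distFn n Ω) x))
      P m c A₁ A₂ hp hβ0 hβ1 hM₁ hK hn' hPdef hmdef hcdef hA₁def hA₂def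
      hdx hrdx hM₂1 hM₂A hρ₀1 hslow hsup hAX hWX hQH htrH
    linarith only [harith]
end
end

section
/- Lemma 2.1 (stability of Gram–Schmidt orthonormalization). For every n ≥ 1 there exist constants κ > 0 and ρ₀ ∈ (0,1), depending only on n, such that the following holds for every ρ ∈ (0, ρ₀]. Let (e₀, ν₁, …, ν_{n−1}) be an orthonormal basis of ℝⁿ and let u ∈ ℝⁿ be a unit vector with ⟨u, e₀⟩ ≥ (1 − ρ)/(1 + ρ). Define recursively ν̆₁ = ν₁ − ⟨u, ν₁⟩u, ν̃₁ = ν̆₁/|ν̆₁|, and for i = 2, …, n−1, ν̆_i = ν_i − (⟨u, ν_i⟩u + Σ_{j=1}^{i−1} ⟨ν̃_j, ν_i⟩ν̃_j), ν̃_i = ν̆_i/|ν̆_i|. Then all ν̆_i are nonzero, (u, ν̃₁, …, ν̃_{n−1}) is an orthonormal basis of ℝⁿ, and |u − e₀| ≤ κ√ρ and |ν_i − ν̃_i| ≤ κ√ρ for i = 1, …, n−1. -/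
open scoped RealInnerProductSpace

/-- **Lemma 2.1** (stability of Gram–Schmidt orthonormalization). Here the dimension is
`n = m + 1 ≥ 1`, the orthonormal basis is `b`, with `e₀ = b 0` and `ν_i = b i.succ`. -/
theorem gram_schmidt_stability (m : ℕ) :
    ∃ κ > (0 : ℝ), ∃ ρ₀ ∈ Set.Ioo (0 : ℝ) 1, ∀ ρ ∈ Set.Ioc (0 : ℝ) ρ₀,
      ∀ b : OrthonormalBasis (Fin (m + 1)) ℝ (EuclideanSpace ℝ (Fin (m + 1))),
      ∀ u : EuclideanSpace ℝ (Fin (m + 1)), ‖u‖ = 1 →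
        (1 - ρ) / (1 + ρ) ≤ ⟪u, b 0⟫ →
        ∀ breveNu tildeNu : Fin m → EuclideanSpace ℝ (Fin (m + 1)),
          (∀ i : Fin m,
            breveNu i = b i.succ -
              (⟪u, b i.succ⟫ • u +
                ∑ j ∈ Finset.univ.filter (fun j => j < i), ⟪tildeNu j, b i.succ⟫ • tildeNu j)) →
          (∀ i : Fin m, tildeNu i = ‖breveNu i‖⁻¹ • breveNu i) →
          (∀ i : Fin m, breveNu i ≠ 0) ∧
          Orthonormal ℝ (Fin.cons u tildeNu : Fin (m + 1) → EuclideanSpace ℝ (Fin (m + 1))) ∧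
          Submodule.span ℝ
              (Set.range (Fin.cons u tildeNu : Fin (m + 1) → EuclideanSpace ℝ (Fin (m + 1))))
            = ⊤ ∧
          ‖u - b 0‖ ≤ κ * Real.sqrt ρ ∧
          (∀ i : Fin m, ‖b i.succ - tildeNu i‖ ≤ κ * Real.sqrt ρ) := by
  refine ⟨4 * 3 ^ m, by positivity, min (1/2) (1 / (8 * 9 ^ m)),
    ⟨lt_min (by norm_num) (by positivity), lt_of_le_of_lt (min_le_left _ _) (by norm_num)⟩, ?_⟩
  rintro ρ ⟨hρ0, hρ1⟩ b u hu hub breveNu tildeNu hbreve htilde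
  have hρsm : ρ ≤ 1 / (8 * 9 ^ m) := hρ1.trans (min_le_right _ _)
  set δ := ‖u - b 0‖ with hδdef
  have hδnn : 0 ≤ δ := norm_nonneg _
  have hb0 : ‖b 0‖ = 1 := b.orthonormal.1 0
  have hδsq : δ ^ 2 ≤ 4 * ρ := by
    have h1 : δ ^ 2 = 2 - 2 * ⟪u, b 0⟫ := by
      rw [hδdef, @norm_sub_sq_real, hu, hb0]; ring
    have hρp : (0:ℝ) < 1 + ρ := by linarith
    rw [div_le_iff₀ hρp] at hub
    nlinarith
  have hsρ : 0 ≤ Real.sqrt ρ := Real.sqrt_nonneg _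
  have hδle : δ ≤ 2 * Real.sqrt ρ := by
    have h2 : (2 * Real.sqrt ρ) ^ 2 = 4 * ρ := by
      rw [mul_pow, Real.sq_sqrt hρ0.le]; ring
    nlinarith
  -- norms of basis vectors
  have hbn : ∀ i : Fin (m+1), ‖b i‖ = 1 := fun i => b.orthonormal.1 i
  -- tildeNu norms ≤ 1
  have htn : ∀ j : Fin m, ‖tildeNu j‖ ≤ 1 := by
    intro j
    rw [htilde j, norm_smul, norm_inv, norm_norm]
    rcases eq_or_ne (breveNu j) 0 with h | h
    · simp [h]
    · rw [inv_mul_cancel₀ (norm_ne_zero_iff.2 h)]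
  -- inner product bounds
  have hinu : ∀ i : Fin m, |⟪u, b i.succ⟫| ≤ δ := by
    intro i
    have h0 : ⟪b 0, b i.succ⟫ = 0 := b.orthonormal.2 (Fin.succ_ne_zero i).symm
    have : ⟪u, b i.succ⟫ = ⟪u - b 0, b i.succ⟫ := by
      rw [inner_sub_left, h0, sub_zero]
    rw [this]
    calc |⟪u - b 0, b i.succ⟫| ≤ ‖u - b 0‖ * ‖b i.succ‖ := abs_real_inner_le_norm _ _
      _ = δ := by rw [hbn, mul_one]
  have hitn : ∀ j i : Fin m, j ≠ i → |⟪tildeNu j, b i.succ⟫| ≤ ‖b j.succ - tildeNu j‖ := by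
    intro j i hji
    have h0 : ⟪b j.succ, b i.succ⟫ = 0 := b.orthonormal.2 (fun h => hji (Fin.succ_injective _ h))
    have : ⟪tildeNu j, b i.succ⟫ = ⟪tildeNu j - b j.succ, b i.succ⟫ := by
      rw [inner_sub_left, h0, sub_zero]
    rw [this]
    calc |⟪tildeNu j - b j.succ, b i.succ⟫| ≤ ‖tildeNu j - b j.succ‖ * ‖b i.succ‖ :=
        abs_real_inner_le_norm _ _
      _ = ‖b j.succ - tildeNu j‖ := by rw [hbn, mul_one, norm_sub_rev]
  -- Lemma A
  have hA : ∀ i : Fin m, ‖b i.succ - breveNu i‖ ≤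
      δ + ∑ j ∈ Finset.univ.filter (fun j => j < i), ‖b j.succ - tildeNu j‖ := by
    intro i
    have hx : b i.succ - breveNu i = ⟪u, b i.succ⟫ • u +
        ∑ j ∈ Finset.univ.filter (fun j => j < i), ⟪tildeNu j, b i.succ⟫ • tildeNu j := by
      rw [hbreve i]; abel
    rw [hx]
    refine (norm_add_le _ _).trans (add_le_add ?_ ?_)
    · rw [norm_smul, hu, mul_one]; exact hinu i
    · refine (norm_sum_le _ _).trans (Finset.sum_le_sum ?_)
      intro j hj
      rw [Finset.mem_filter] at hj
      have hji : j ≠ i := ne_of_lt hj.2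
      calc ‖⟪tildeNu j, b i.succ⟫ • tildeNu j‖ = |⟪tildeNu j, b i.succ⟫| * ‖tildeNu j‖ := by
            rw [norm_smul]; rfl
        _ ≤ ‖b j.succ - tildeNu j‖ * 1 := by
            apply mul_le_mul (hitn j i hji) (htn j) (norm_nonneg _)
              ((abs_nonneg _).trans (hitn j i hji))
        _ = ‖b j.succ - tildeNu j‖ := mul_one _
  -- Lemma B
  have hB : ∀ i : Fin m, ‖b i.succ - tildeNu i‖ ≤ 2 * ‖b i.succ - breveNu i‖ := by
    intro i
    rcases eq_or_ne (breveNu i) 0 with h | h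
    · rw [htilde i, h, smul_zero, sub_zero, hbn]
      norm_num
    · have hbp : 0 < ‖breveNu i‖ := norm_pos_iff.2 h
      have h1 : ‖breveNu i - tildeNu i‖ = |‖breveNu i‖ - 1| := by
        rw [htilde i]
        have : breveNu i - ‖breveNu i‖⁻¹ • breveNu i = (1 - ‖breveNu i‖⁻¹) • breveNu i := by
          rw [sub_smul, one_smul]
        rw [this, norm_smul, Real.norm_eq_abs]
        rw [show (1 - ‖breveNu i‖⁻¹) = (‖breveNu i‖ - 1) / ‖breveNu i‖ by
          field_simp]
        rw [abs_div, abs_of_pos hbp, div_mul_cancel₀ _ hbp.ne']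
      have h2 : |‖breveNu i‖ - 1| ≤ ‖b i.succ - breveNu i‖ := by
        calc |‖breveNu i‖ - 1| = |‖breveNu i‖ - ‖b i.succ‖| := by rw [hbn]
          _ ≤ ‖breveNu i - b i.succ‖ := abs_norm_sub_norm_le _ _
          _ = ‖b i.succ - breveNu i‖ := norm_sub_rev _ _
      calc ‖b i.succ - tildeNu i‖ ≤ ‖b i.succ - breveNu i‖ + ‖breveNu i - tildeNu i‖ := by
            have : b i.succ - tildeNu i = (b i.succ - breveNu i) + (breveNu i - tildeNu i) := by
              abel
            rw [this]; exact norm_add_le _ _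
        _ ≤ ‖b i.succ - breveNu i‖ + ‖b i.succ - breveNu i‖ := by
            rw [h1]; exact add_le_add_right h2 _
        _ = 2 * ‖b i.succ - breveNu i‖ := by ring
  -- sum over filter equals sum over range
  have hconv : ∀ i : Fin m, ∀ F : ℕ → ℝ,
      ∑ j ∈ Finset.univ.filter (fun j => j < i), F (j : ℕ) = ∑ k ∈ Finset.range (i : ℕ), F k := by
    intro i F
    refine Finset.sum_nbij' (fun j => (j : ℕ)) (fun k => ⟨k % m, Nat.mod_lt k i.pos⟩) ?_ ?_ ?_ ?_ ?_
    · intro j hj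
      rw [Finset.mem_filter] at hj
      exact Finset.mem_range.2 hj.2
    · intro k hk
      rw [Finset.mem_range] at hk
      have hkm : k < m := lt_trans hk i.isLt
      rw [Finset.mem_filter]
      refine ⟨Finset.mem_univ _, ?_⟩
      show Fin.mk (k % m) _ < i
      simp only [Fin.lt_def]
      simpa [Nat.mod_eq_of_lt hkm] using hk
    · intro j hj
      rw [Finset.mem_filter] at hj
      ext
      simp [Nat.mod_eq_of_lt j.isLt]
    · intro k hk
      rw [Finset.mem_range] at hk
      simp [Nat.mod_eq_of_lt (lt_trans hk i.isLt)]
    · intro j _; rfl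
  -- Lemma C : geometric bound, by strong induction
  have hG : ∀ k : ℕ, ∀ i : Fin m, (i : ℕ) = k →
      δ + ∑ j ∈ Finset.univ.filter (fun j => j < i), ‖b j.succ - tildeNu j‖ ≤ 3 ^ (i : ℕ) * δ := by
    intro k
    induction k using Nat.strong_induction_on with
    | _ k ih =>
      intro i hik
      have hterm : ∀ j ∈ Finset.univ.filter (fun j => j < i),
          ‖b j.succ - tildeNu j‖ ≤ 2 * 3 ^ (j : ℕ) * δ := by
        intro j hj
        rw [Finset.mem_filter] at hj
        have hjk : (j : ℕ) < k := hik ▸ hj.2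
        calc ‖b j.succ - tildeNu j‖ ≤ 2 * ‖b j.succ - breveNu j‖ := hB j
          _ ≤ 2 * (δ + ∑ l ∈ Finset.univ.filter (fun l => l < j), ‖b l.succ - tildeNu l‖) := by
              linarith [hA j]
          _ ≤ 2 * (3 ^ (j : ℕ) * δ) := by linarith [ih (j : ℕ) hjk j rfl]
          _ = 2 * 3 ^ (j : ℕ) * δ := by ring
      have hsb : ∑ j ∈ Finset.univ.filter (fun j => j < i), ‖b j.succ - tildeNu j‖ ≤
          ∑ j ∈ Finset.univ.filter (fun j => j < i), 2 * 3 ^ (j : ℕ) * δ :=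
        Finset.sum_le_sum hterm
      have hgeo : ∑ j ∈ Finset.univ.filter (fun j => j < i), 2 * (3:ℝ) ^ (j : ℕ) * δ =
          (3 ^ (i : ℕ) - 1) * δ := by
        rw [hconv i (fun n => 2 * (3:ℝ) ^ n * δ)]
        rw [show (fun n => 2 * (3:ℝ) ^ n * δ) = fun n => (2 * δ) * (3:ℝ) ^ n by ext n; ring]
        rw [← Finset.mul_sum, geom_sum_eq (by norm_num : (3:ℝ) ≠ 1)]
        ring
      calc δ + ∑ j ∈ Finset.univ.filter (fun j => j < i), ‖b j.succ - tildeNu j‖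
          ≤ δ + (3 ^ (i : ℕ) - 1) * δ := by rw [← hgeo]; linarith
        _ = 3 ^ (i : ℕ) * δ := by ring
  have hG' : ∀ i : Fin m,
      δ + ∑ j ∈ Finset.univ.filter (fun j => j < i), ‖b j.succ - tildeNu j‖ ≤ 3 ^ m * δ := by
    intro i
    refine (hG (i : ℕ) i rfl).trans ?_
    have : (3:ℝ) ^ (i : ℕ) ≤ 3 ^ m := pow_le_pow_right₀ (by norm_num) i.isLt.le
    nlinarith
  -- breveNu distance and nonzeroness
  have hsum_nn : ∀ i : Fin m,
      0 ≤ ∑ j ∈ Finset.univ.filter (fun j => j < i), ‖b j.succ - tildeNu j‖ :=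
    fun i => Finset.sum_nonneg fun j _ => norm_nonneg _
  have h3m : (1:ℝ) ≤ 3 ^ m := one_le_pow₀ (by norm_num : (1:ℝ) ≤ 3)
  have hAd : ∀ i : Fin m, ‖b i.succ - breveNu i‖ ≤ 3 ^ m * δ := fun i =>
    (hA i).trans (hG' i)
  have hkey : (3:ℝ) ^ m * δ < 1 := by
    have h1 : ((3:ℝ) ^ m * δ) ^ 2 ≤ 9 ^ m * (4 * ρ) := by
      have : ((3:ℝ) ^ m) ^ 2 = 9 ^ m := by
        rw [← pow_mul, show (9:ℝ) = 3 ^ 2 by norm_num, ← pow_mul, mul_comm]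
      nlinarith [pow_nonneg (by norm_num : (0:ℝ) ≤ 3) m, sq_nonneg δ]
    have h2 : (9:ℝ) ^ m * (4 * ρ) ≤ 1 / 2 := by
      have h9 : (0:ℝ) < 9 ^ m := by positivity
      rw [le_div_iff₀ (by positivity : (0:ℝ) < 8 * 9 ^ m)] at hρsm
      nlinarith
    nlinarith [mul_nonneg (pow_nonneg (by norm_num : (0:ℝ) ≤ 3) m) hδnn]
  have hnz : ∀ i : Fin m, breveNu i ≠ 0 := by
    intro i h
    have := hAd i
    rw [h, sub_zero, hbn] at this
    linarith [hkey]
  have htn1 : ∀ j : Fin m, ‖tildeNu j‖ = 1 := by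
    intro j
    rw [htilde j, norm_smul, norm_inv, norm_norm,
      inv_mul_cancel₀ (norm_ne_zero_iff.2 (hnz j))]
  -- final distance bounds
  have hdist : ∀ i : Fin m, ‖b i.succ - tildeNu i‖ ≤ 4 * 3 ^ m * Real.sqrt ρ := by
    intro i
    calc ‖b i.succ - tildeNu i‖ ≤ 2 * ‖b i.succ - breveNu i‖ := hB i
      _ ≤ 2 * (3 ^ m * δ) := by linarith [hAd i]
      _ ≤ 2 * (3 ^ m * (2 * Real.sqrt ρ)) := by nlinarith
      _ = 4 * 3 ^ m * Real.sqrt ρ := by ring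
  have hudist : δ ≤ 4 * 3 ^ m * Real.sqrt ρ := by nlinarith
  -- orthogonality, by strong induction
  have horth : ∀ k : ℕ, ∀ i : Fin m, (i : ℕ) = k →
      ⟪u, tildeNu i⟫ = 0 ∧ ∀ l : Fin m, l < i → ⟪tildeNu l, tildeNu i⟫ = 0 := by
    intro k
    induction k using Nat.strong_induction_on with
    | _ k ih =>
      intro i hik
      have ihu : ∀ j : Fin m, j < i → ⟪u, tildeNu j⟫ = 0 := fun j hj =>
        (ih (j : ℕ) (hik ▸ hj) j rfl).1
      have ihtt : ∀ l j : Fin m, l < j → j < i → ⟪tildeNu l, tildeNu j⟫ = 0 := fun l j hlj hj =>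
        (ih (j : ℕ) (hik ▸ hj) j rfl).2 l hlj
      have hbu : ⟪u, breveNu i⟫ = 0 := by
        rw [hbreve i, inner_sub_right, inner_add_right, inner_smul_right, inner_sum]
        have huu : ⟪u, u⟫ = 1 := by
          rw [real_inner_self_eq_norm_sq, hu]; norm_num
        rw [huu, mul_one]
        rw [Finset.sum_eq_zero fun j hj => by
          rw [Finset.mem_filter] at hj
          rw [inner_smul_right, ihu j hj.2, mul_zero]]
        ring
      have hbt : ∀ l : Fin m, l < i → ⟪tildeNu l, breveNu i⟫ = 0 := by
        intro l hl
        rw [hbreve i, inner_sub_right, inner_add_right, inner_smul_right, inner_sum]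
        have hlu : ⟪tildeNu l, u⟫ = 0 := by
          rw [real_inner_comm]; exact ihu l hl
        rw [hlu, mul_zero]
        have hmem : l ∈ Finset.univ.filter (fun j => j < i) :=
          Finset.mem_filter.2 ⟨Finset.mem_univ _, hl⟩
        rw [Finset.sum_eq_single_of_mem l hmem (fun j hj hjl => by
          rw [Finset.mem_filter] at hj
          rw [inner_smul_right]
          rcases lt_or_gt_of_ne hjl with h | h
          · rw [real_inner_comm (tildeNu j) (tildeNu l), ihtt j l h hl, mul_zero]
          · rw [ihtt l j h hj.2, mul_zero])]
        rw [inner_smul_right, real_inner_self_eq_norm_sq, htn1 l]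
        ring
      constructor
      · rw [htilde i, inner_smul_right, hbu, mul_zero]
      · intro l hl
        rw [htilde i, inner_smul_right, hbt l hl, mul_zero]
  have h0s : ∀ l : Fin m, ⟪u, tildeNu l⟫ = 0 := fun l => (horth (l : ℕ) l rfl).1
  have hss : ∀ l j : Fin m, l ≠ j → ⟪tildeNu l, tildeNu j⟫ = 0 := by
    intro l j h
    rcases lt_or_gt_of_ne h with h' | h'
    · exact (horth (j : ℕ) j rfl).2 l h'
    · rw [real_inner_comm]; exact (horth (l : ℕ) l rfl).2 j h'
  have hON : Orthonormal ℝ (Fin.cons u tildeNu : Fin (m + 1) → EuclideanSpace ℝ (Fin (m + 1))) := by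
    constructor
    · intro i
      rcases Fin.eq_zero_or_eq_succ i with rfl | ⟨k, rfl⟩
      · simpa using hu
      · simpa using htn1 k
    · intro i j hij
      rcases Fin.eq_zero_or_eq_succ i with rfl | ⟨k, rfl⟩ <;>
        rcases Fin.eq_zero_or_eq_succ j with rfl | ⟨l, rfl⟩
      · exact absurd rfl hij
      · simpa using h0s l
      · rw [Fin.cons_succ, Fin.cons_zero, real_inner_comm]
        simpa using h0s k
      · rw [Fin.cons_succ, Fin.cons_succ]
        exact hss k l (fun h => hij (by rw [h]))
  have hspan : Submodule.span ℝ
      (Set.range (Fin.cons u tildeNu : Fin (m + 1) → EuclideanSpace ℝ (Fin (m + 1)))) = ⊤ := by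
    apply hON.linearIndependent.span_eq_top_of_card_eq_finrank
    simp [finrank_euclideanSpace]
  exact ⟨hnz, hON, hspan, hudist, hdist⟩
end

section
/- Lemma 2.2 (matrix inequality for the p-Laplacian symbol). Let n ≥ 1, p > 1. Let ξ̄_x, ξ̄_y ∈ ℝⁿ \ {0} with unit vectors ξ̂_x = ξ̄_x/|ξ̄_x| and ξ̂_y = ξ̄_y/|ξ̄_y|. Let (ξ̂_y, ν₁, …, ν_{n−1}) and (ξ̂_x, ν̃₁, …, ν̃_{n−1}) be orthonormal bases of ℝⁿ. Let X, Y be real symmetric n×n matrices and let D be a real symmetric 2n×2n matrix such that the block-diagonal matrix with blocks X and −Y is ≤ D (i.e. D minus that block matrix is positive semidefinite). Write M_x for the upper-left n×n block of D, M_y for the lower-right n×n block of D, and for i = 1,…,n−1 let ζ_i ∈ ℝ^{2n} be the concatenation (ν̃_i, ν_i). Then F(ξ̄_x, X) − F(−ξ̄_y, Y) ≤ (p−1)(|ξ̄_x|^{p−4}⟨M_x ξ̄_x, ξ̄_x⟩ + |ξ̄_y|^{p−4}⟨M_y ξ̄_y, ξ̄_y⟩) + (|ξ̄_x|^{p−2}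 + |ξ̄_y|^{p−2}) Σ_{i=1}^{n−1} max(⟨D ζ_i, ζ_i⟩, 0) + | |ξ̄_x|^{p−2} − |ξ̄_y|^{p−2} | Σ_{i=1}^{n−1} ( |⟨M_x ν̃_i, ν̃_i⟩| + |⟨M_y ν_i, ν_i⟩| ). -/
open scoped RealInnerProductSpace

noncomputable section

open Matrix in
lemma quadForm_nonneg' {ι : Type*} [Fintype ι] (M : Matrix ι ι ℝ) (hM : M.PosSemidef)
    (z : ι → ℝ) : 0 ≤ quadForm M z := by
  have := hM.dotProduct_mulVec_nonneg z
  simpa [quadForm, dotProduct, mul_comm] using this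

lemma quadForm_sub' {ι : Type*} [Fintype ι] (M N : Matrix ι ι ℝ) (z : ι → ℝ) :
    quadForm (M - N) z = quadForm M z - quadForm N z := by
  simp [quadForm, Matrix.sub_mulVec, sub_mul, Finset.sum_sub_distrib]

lemma quadForm_smul' {ι : Type*} [Fintype ι] (M : Matrix ι ι ℝ) (c : ℝ) (v : ι → ℝ) :
    quadForm M (fun j => c * v j) = c ^ 2 * quadForm M v := by
  simp only [quadForm, Matrix.mulVec, dotProduct, Finset.mul_sum, Finset.sum_mul]
  apply Finset.sum_congr rfl
  intro i _
  apply Finset.sum_congr rfl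
  intro j _
  ring

open Matrix in
lemma trace_eq_sum_quadForm' {n : ℕ} (X : Matrix (Fin n) (Fin n) ℝ)
    (e : Fin n → EuclideanSpace ℝ (Fin n)) (he : Orthonormal ℝ e) :
    X.trace = ∑ i, quadForm X (fun j => e i j) := by
  set U : Matrix (Fin n) (Fin n) ℝ := Matrix.of (fun j i => e i j) with hUdef
  have hinner := orthonormal_iff_ite.mp he
  have hU : Uᵀ * U = 1 := by
    ext i j
    have := hinner i j
    rw [PiLp.inner_apply] at this
    simp only [RCLike.inner_apply, starRingEnd_apply, star_trivial] at this
    simp only [Matrix.mul_apply, Matrix.transpose_apply, hUdef, Matrix.of_apply,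
      Matrix.one_apply]
    simpa [mul_comm] using this
  have hU' : U * Uᵀ = 1 := mul_eq_one_comm.mp hU
  have h1 : ∑ i, quadForm X (fun j => e i j) = (Uᵀ * X * U).trace := by
    rw [Matrix.trace]
    apply Finset.sum_congr rfl
    intro i _
    simp only [quadForm, Matrix.diag_apply, Matrix.mul_apply, Matrix.mulVec,
      dotProduct, Matrix.transpose_apply, hUdef, Matrix.of_apply, Finset.sum_mul]
    rw [Finset.sum_comm]
    apply Finset.sum_congr rfl
    intro j _
    apply Finset.sum_congr rfl
    intro k _
    ring
  rw [h1, Matrix.trace_mul_cycle, hU', Matrix.one_mul]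

lemma quadForm_elim_left' {n : ℕ} (M : Matrix (Fin n ⊕ Fin n) (Fin n ⊕ Fin n) ℝ)
    (u : Fin n → ℝ) :
    quadForm M (Sum.elim u 0) = quadForm M.toBlocks₁₁ u := by
  simp [quadForm, Matrix.mulVec, dotProduct, Fintype.sum_sum_type, Matrix.toBlocks₁₁]

lemma quadForm_elim_right' {n : ℕ} (M : Matrix (Fin n ⊕ Fin n) (Fin n ⊕ Fin n) ℝ)
    (w : Fin n → ℝ) :
    quadForm M (Sum.elim 0 w) = quadForm M.toBlocks₂₂ w := by
  simp [quadForm, Matrix.mulVec, dotProduct, Fintype.sum_sum_type, Matrix.toBlocks₂₂]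

lemma quadForm_fromBlocks' {n : ℕ} (X Y : Matrix (Fin n) (Fin n) ℝ) (u w : Fin n → ℝ) :
    quadForm (Matrix.fromBlocks X 0 0 (-Y)) (Sum.elim u w)
      = quadForm X u - quadForm Y w := by
  simp [quadForm, Matrix.mulVec, dotProduct, Fintype.sum_sum_type,
    Finset.sum_sub_distrib, sub_mul, neg_mul, Finset.sum_neg_distrib, sub_eq_add_neg]

lemma key_ineq' (a b s t d mx my : ℝ) (ha : 0 ≤ a) (hb : 0 ≤ b)
    (h1 : s - t ≤ d) (h2 : s ≤ mx) (h3 : -t ≤ my) :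
    a * s - b * t ≤ (a + b) * max d 0 + |a - b| * (|mx| + |my|) := by
  have hd : d ≤ max d 0 := le_max_left _ _
  have h0 : (0:ℝ) ≤ max d 0 := le_max_right _ _
  have hmx : mx ≤ |mx| := le_abs_self mx
  have hmy : my ≤ |my| := le_abs_self my
  have hax : 0 ≤ |mx| := abs_nonneg mx
  have hay : 0 ≤ |my| := abs_nonneg my
  rcases le_total a b with h | h
  · have habs : |a - b| = b - a := by rw [abs_of_nonpos (by linarith)]; ring
    rw [habs]
    nlinarith [mul_le_mul_of_nonneg_left h1 ha, mul_le_mul_of_nonneg_left hd ha,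
      mul_le_mul_of_nonneg_left h3 (by linarith : (0:ℝ) ≤ b - a),
      mul_le_mul_of_nonneg_left hmy (by linarith : (0:ℝ) ≤ b - a)]
  · have habs : |a - b| = a - b := abs_of_nonneg (by linarith)
    rw [habs]
    nlinarith [mul_le_mul_of_nonneg_left h1 hb, mul_le_mul_of_nonneg_left hd hb,
      mul_le_mul_of_nonneg_left h2 (by linarith : (0:ℝ) ≤ a - b),
      mul_le_mul_of_nonneg_left hmx (by linarith : (0:ℝ) ≤ a - b)]

/-- **Lemma 2.2** (matrix inequality for the `p`-Laplacian symbol). The dimension is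
`n = m + 1 ≥ 1`; `(ξ̂_y, ν₁, …, ν_{n−1})` and `(ξ̂_x, ν̃₁, …, ν̃_{n−1})` are orthonormal
bases; `Mx`, `My` are the diagonal blocks of `D` and `ζ i` is the concatenation of
`ν̃ i` and `ν i`. -/
theorem matrix_inequality_p_laplacian_symbol
    (m : ℕ) (p : ℝ) (hp : 1 < p)
    (ξx ξy : EuclideanSpace ℝ (Fin (m + 1))) (hξx : ξx ≠ 0) (hξy : ξy ≠ 0)
    (ν tildeν : Fin m → EuclideanSpace ℝ (Fin (m + 1)))
    (hONy : Orthonormal ℝ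
      (Fin.cons (‖ξy‖⁻¹ • ξy) ν : Fin (m + 1) → EuclideanSpace ℝ (Fin (m + 1))))
    (hspany : Submodule.span ℝ
      (Set.range (Fin.cons (‖ξy‖⁻¹ • ξy) ν : Fin (m + 1) → EuclideanSpace ℝ (Fin (m + 1))))
        = ⊤)
    (hONx : Orthonormal ℝ
      (Fin.cons (‖ξx‖⁻¹ • ξx) tildeν : Fin (m + 1) → EuclideanSpace ℝ (Fin (m + 1))))
    (hspanx : Submodule.span ℝ
      (Set.range (Fin.cons (‖ξx‖⁻¹ • ξx) tildeν : Fin (m + 1) → EuclideanSpace ℝ (Fin (m + 1))))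
        = ⊤)
    (X Y : Matrix (Fin (m + 1)) (Fin (m + 1)) ℝ) (hX : X.IsSymm) (hY : Y.IsSymm)
    (D : Matrix (Fin (m + 1) ⊕ Fin (m + 1)) (Fin (m + 1) ⊕ Fin (m + 1)) ℝ) (hD : D.IsSymm)
    (hpsd : (D - Matrix.fromBlocks X 0 0 (-Y)).PosSemidef) :
    Fsym (m + 1) p ξx X - Fsym (m + 1) p (-ξy) Y ≤
      (p - 1) * (‖ξx‖ ^ (p - 4) * quadForm D.toBlocks₁₁ (fun j => ξx j)
          + ‖ξy‖ ^ (p - 4) * quadForm D.toBlocks₂₂ (fun j => ξy j))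
      + (‖ξx‖ ^ (p - 2) + ‖ξy‖ ^ (p - 2)) *
          ∑ i : Fin m, max (quadForm D (Sum.elim (fun j => tildeν i j) (fun j => ν i j))) 0
      + |‖ξx‖ ^ (p - 2) - ‖ξy‖ ^ (p - 2)| *
          ∑ i : Fin m, (|quadForm D.toBlocks₁₁ (fun j => tildeν i j)|
            + |quadForm D.toBlocks₂₂ (fun j => ν i j)|) := by
  have hrx : (0:ℝ) < ‖ξx‖ := norm_pos_iff.mpr hξx
  have hry : (0:ℝ) < ‖ξy‖ := norm_pos_iff.mpr hξy
  set rx := ‖ξx‖ with hrxdef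
  set ry := ‖ξy‖ with hrydef
  set A := rx ^ (p - 2) with hAdef
  set B := ry ^ (p - 2) with hBdef
  set A4 := rx ^ (p - 4) with hA4def
  set B4 := ry ^ (p - 4) with hB4def
  have hApos : 0 < A := Real.rpow_pos_of_pos hrx _
  have hBpos : 0 < B := Real.rpow_pos_of_pos hry _
  have hA4pos : 0 < A4 := Real.rpow_pos_of_pos hrx _
  have hB4pos : 0 < B4 := Real.rpow_pos_of_pos hry _
  -- rpow algebra
  have h2 : ∀ r : ℝ, 0 < r → r ^ ((2:ℝ)) = r ^ 2 := by
    intro r hr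
    rw [show ((2:ℝ)) = ((2:ℕ):ℝ) by norm_num, Real.rpow_natCast]
  have hAeq : A * (rx⁻¹) ^ 2 = A4 := by
    have h := Real.rpow_add hrx (p - 4) 2
    rw [show p - 4 + 2 = p - 2 by ring] at h
    rw [hAdef, h, h2 rx hrx]
    field_simp
    rw [hA4def]
  have hBeq : B * (ry⁻¹) ^ 2 = B4 := by
    have h := Real.rpow_add hry (p - 4) 2
    rw [show p - 4 + 2 = p - 2 by ring] at h
    rw [hBdef, h, h2 ry hry]
    field_simp
    rw [hB4def]
  -- abbreviations
  set s0 := quadForm X (fun j => ξx j) with hs0def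
  set t0 := quadForm Y (fun j => ξy j) with ht0def
  set mx0 := quadForm D.toBlocks₁₁ (fun j => ξx j) with hmx0def
  set my0 := quadForm D.toBlocks₂₂ (fun j => ξy j) with hmy0def
  -- PSD consequence
  have hKey : ∀ u w : Fin (m+1) → ℝ,
      quadForm X u - quadForm Y w ≤ quadForm D (Sum.elim u w) := by
    intro u w
    have h0 := quadForm_nonneg' _ hpsd (Sum.elim u w)
    rw [quadForm_sub', quadForm_fromBlocks'] at h0
    linarith
  have hqY0 : quadForm Y (0 : Fin (m+1) → ℝ) = 0 := by
    simp [quadForm, Matrix.mulVec_zero]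
  have hqX0 : quadForm X (0 : Fin (m+1) → ℝ) = 0 := by
    simp [quadForm, Matrix.mulVec_zero]
  have f3 : s0 ≤ mx0 := by
    have := hKey (fun j => ξx j) 0
    rw [hqY0, quadForm_elim_left'] at this
    linarith
  have f4 : -t0 ≤ my0 := by
    have := hKey 0 (fun j => ξy j)
    rw [hqX0, quadForm_elim_right'] at this
    linarith
  have f5 : ∀ i : Fin m,
      quadForm X (fun j => tildeν i j) - quadForm Y (fun j => ν i j)
        ≤ quadForm D (Sum.elim (fun j => tildeν i j) (fun j => ν i j)) :=
    fun i => hKey _ _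
  have f6 : ∀ i : Fin m,
      quadForm X (fun j => tildeν i j) ≤ quadForm D.toBlocks₁₁ (fun j => tildeν i j) := by
    intro i
    have := hKey (fun j => tildeν i j) 0
    rw [hqY0, quadForm_elim_left'] at this
    linarith
  have f7 : ∀ i : Fin m,
      -quadForm Y (fun j => ν i j) ≤ quadForm D.toBlocks₂₂ (fun j => ν i j) := by
    intro i
    have := hKey 0 (fun j => ν i j)
    rw [hqX0, quadForm_elim_right'] at this
    linarith
  -- traces via orthonormal bases
  have hTX : X.trace = (rx⁻¹) ^ 2 * s0 + ∑ i : Fin m, quadForm X (fun j => tildeν i j) := by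
    rw [trace_eq_sum_quadForm' X _ hONx, Fin.sum_univ_succ]
    congr 1
    · have he : (fun j => (Fin.cons (rx⁻¹ • ξx) tildeν :
          Fin (m+1) → EuclideanSpace ℝ (Fin (m+1))) 0 j) = fun j => rx⁻¹ * ξx j := by
        funext j; simp
      rw [he, quadForm_smul']
  have hTY : Y.trace = (ry⁻¹) ^ 2 * t0 + ∑ i : Fin m, quadForm Y (fun j => ν i j) := by
    rw [trace_eq_sum_quadForm' Y _ hONy, Fin.sum_univ_succ]
    congr 1
    · have he : (fun j => (Fin.cons (ry⁻¹ • ξy) ν :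
          Fin (m+1) → EuclideanSpace ℝ (Fin (m+1))) 0 j) = fun j => ry⁻¹ * ξy j := by
        funext j; simp
      rw [he, quadForm_smul']
  -- Fsym expansion
  have hnegnorm : ‖(-ξy : EuclideanSpace ℝ (Fin (m+1)))‖ = ry := by
    rw [norm_neg]
  have hnegquad : quadForm Y (fun i => (-ξy : EuclideanSpace ℝ (Fin (m+1))) i) = t0 := by
    have he : (fun i => (-ξy : EuclideanSpace ℝ (Fin (m+1))) i)
        = fun i => (-1 : ℝ) * ξy i := by
      funext i; simp
    rw [he, quadForm_smul']
    ring
  have hL : Fsym (m + 1) p ξx X - Fsym (m + 1) p (-ξy) Y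
      = (p - 1) * (A4 * s0 - B4 * t0)
        + (A * (∑ i : Fin m, quadForm X (fun j => tildeν i j))
          - B * (∑ i : Fin m, quadForm Y (fun j => ν i j))) := by
    rw [Fsym, Fsym, hnegnorm, hnegquad, hTX, hTY]
    rw [← hrxdef, ← hAdef, ← hBdef, ← hA4def, ← hB4def, ← hs0def]
    rw [show A * ((rx⁻¹) ^ 2 * s0 + ∑ i : Fin m, quadForm X (fun j => tildeν i j))
        = A * (rx⁻¹) ^ 2 * s0 + A * ∑ i : Fin m, quadForm X (fun j => tildeν i j) by ring,
      show B * ((ry⁻¹) ^ 2 * t0 + ∑ i : Fin m, quadForm Y (fun j => ν i j))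
        = B * (ry⁻¹) ^ 2 * t0 + B * ∑ i : Fin m, quadForm Y (fun j => ν i j) by ring,
      hAeq, hBeq]
    ring
  rw [hL]
  have hb1 : (p - 1) * (A4 * s0 - B4 * t0) ≤ (p - 1) * (A4 * mx0 + B4 * my0) := by
    apply mul_le_mul_of_nonneg_left _ (by linarith)
    nlinarith [mul_le_mul_of_nonneg_left f3 hA4pos.le,
      mul_le_mul_of_nonneg_left f4 hB4pos.le]
  have hb2 : A * (∑ i : Fin m, quadForm X (fun j => tildeν i j))
        - B * (∑ i : Fin m, quadForm Y (fun j => ν i j))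
      ≤ (A + B) *
          (∑ i : Fin m, max (quadForm D (Sum.elim (fun j => tildeν i j) (fun j => ν i j))) 0)
        + |A - B| *
          ∑ i : Fin m, (|quadForm D.toBlocks₁₁ (fun j => tildeν i j)|
            + |quadForm D.toBlocks₂₂ (fun j => ν i j)|) := by
    rw [Finset.mul_sum, Finset.mul_sum, Finset.mul_sum, Finset.mul_sum,
      ← Finset.sum_sub_distrib, ← Finset.sum_add_distrib]
    apply Finset.sum_le_sum
    intro i _
    exact key_ineq' A B _ _ _ _ _ hApos.le hBpos.le (f5 i) (f6 i) (f7 i)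
  linarith
end
end
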